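/- arXiv:1309.0345 — 8 statements merged into one kernel-verified Lean document; each statement's English description precedes it below -/
import Mathlib

section
/- For every ε>0 and every function F: ℕ→ℕ there exist K∈ℕ and natural numbers M_1,…,M_K ≥ 1 such that the following holds: for every Borel measure μ on the unit circle 𝕋 = {z∈ℂ : |z|=1} and every f∈L²(𝕋,μ) with ‖f‖_{L²(μ)} ≤ 1 there exists i∈{1,…,K} such that for all N, N' with M_i ≤ N, N' ≤ F(M_i) one has ‖(1/N)Σ_{n=1}^{N} Uⁿf − (1/N')Σ_{n=1}^{N'} Uⁿf‖_{L²(μ)} < ε, where U is the multiplication operator on L²(𝕋,μ) given by (Uf)(λ) = λ·f(λ), so that (Uⁿf)(λ) = λⁿ·f(λ). -/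
open MeasureTheory Finset
open scoped ENNReal NNReal

lemma pow_sub_one_norm (z : ℂ) (hz : ‖z‖ = 1) (n : ℕ) : ‖z ^ n - 1‖ ≤ n * ‖z - 1‖ := by
  induction n with
  | zero => simp
  | succ n ih =>
    have : z ^ (n+1) - 1 = z ^ n * (z - 1) + (z ^ n - 1) := by ring
    rw [this]
    calc ‖z ^ n * (z - 1) + (z ^ n - 1)‖ ≤ ‖z ^ n * (z - 1)‖ + ‖z ^ n - 1‖ := norm_add_le _ _
    _ ≤ 1 * ‖z - 1‖ + n * ‖z - 1‖ := by
        gcongr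
        · rw [norm_mul, norm_pow, hz, one_pow, one_mul]
    _ = (n + 1 : ℕ) * ‖z - 1‖ := by push_cast; ring

lemma cN_sub_one_norm (z : ℂ) (hz : ‖z‖ = 1) (N : ℕ) (hN : 1 ≤ N) :
    ‖(N : ℂ)⁻¹ * ∑ n ∈ Icc 1 N, z ^ n - 1‖ ≤ N * ‖z - 1‖ := by
  have hN0 : (0:ℝ) < N := by exact_mod_cast hN
  have hNc : (N : ℂ) ≠ 0 := by exact_mod_cast hN0.ne'
  have h1 : (N : ℂ)⁻¹ * ∑ n ∈ Icc 1 N, z ^ n - 1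
      = (N : ℂ)⁻¹ * ∑ n ∈ Icc 1 N, (z ^ n - 1) := by
    rw [Finset.sum_sub_distrib]
    rw [Finset.sum_const, Nat.card_Icc]
    field_simp
    simp
  rw [h1, norm_mul, norm_inv]
  have h2 : ‖∑ n ∈ Icc 1 N, (z ^ n - 1)‖ ≤ ∑ n ∈ Icc 1 N, (n : ℝ) * ‖z - 1‖ := by
    refine (norm_sum_le _ _).trans ?_
    exact Finset.sum_le_sum fun n _ => pow_sub_one_norm z hz n
  have h3 : ∑ n ∈ Icc 1 N, (n : ℝ) * ‖z - 1‖ ≤ N * (N * ‖z - 1‖) := by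
    calc ∑ n ∈ Icc 1 N, (n : ℝ) * ‖z - 1‖ ≤ ∑ _n ∈ Icc 1 N, (N : ℝ) * ‖z - 1‖ := by
          refine Finset.sum_le_sum fun n hn => ?_
          have h := (Finset.mem_Icc.mp hn).2
          have hn' : (n:ℝ) ≤ N := by exact_mod_cast h
          have : (0:ℝ) ≤ ‖z - 1‖ := norm_nonneg _
          nlinarith
    _ = N * (N * ‖z - 1‖) := by rw [Finset.sum_const, Nat.card_Icc]; push_cast; ring
  calc ‖(N:ℂ)‖⁻¹ * ‖∑ n ∈ Icc 1 N, (z ^ n - 1)‖ ≤ ‖(N:ℂ)‖⁻¹ * (N * (N * ‖z - 1‖)) := by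
        gcongr
        exact h2.trans h3
  _ = N * ‖z - 1‖ := by
        rw [Complex.norm_natCast]
        field_simp

lemma sum_pow_Icc (z : ℂ) (N : ℕ) : ∑ n ∈ Icc 1 N, z ^ n = z * ∑ k ∈ range N, z ^ k := by
  rw [Finset.mul_sum]
  rw [show Icc 1 N = Finset.map ⟨fun k => k + 1, add_left_injective 1⟩ (range N) by
    ext x
    simp only [Finset.mem_Icc, Finset.mem_map, Finset.mem_range, Function.Embedding.coeFn_mk]
    constructor
    · rintro ⟨h1, h2⟩; exact ⟨x - 1, by omega, by omega⟩
    · rintro ⟨k, hk, rfl⟩; omega]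
  rw [Finset.sum_map]
  simp [pow_succ, mul_comm]

lemma cN_norm_le (z : ℂ) (hz : ‖z‖ = 1) (hz1 : z ≠ 1) (N : ℕ) (hN : 1 ≤ N) :
    ‖(N : ℂ)⁻¹ * ∑ n ∈ Icc 1 N, z ^ n‖ ≤ 2 / (N * ‖z - 1‖) := by
  have hN0 : (0:ℝ) < N := by exact_mod_cast hN
  have hd : (0:ℝ) < ‖z - 1‖ := by
    rw [norm_pos_iff]; exact sub_ne_zero.mpr hz1
  rw [sum_pow_Icc, geom_sum_eq hz1, norm_mul, norm_mul, norm_inv, norm_div,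
    Complex.norm_natCast, hz, one_mul]
  have h2 : ‖z ^ N - 1‖ ≤ 2 := by
    calc ‖z ^ N - 1‖ ≤ ‖z ^ N‖ + ‖(1:ℂ)‖ := norm_sub_le _ _
    _ = 2 := by rw [norm_pow, hz, one_pow, norm_one]; norm_num
  calc (N:ℝ)⁻¹ * (‖z ^ N - 1‖ / ‖z - 1‖) ≤ (N:ℝ)⁻¹ * (2 / ‖z - 1‖) :=
        mul_le_mul_of_nonneg_left (by gcongr) (by positivity)
  _ = 2 / (N * ‖z - 1‖) := by field_simp

lemma cN_norm_le_one (z : ℂ) (hz : ‖z‖ = 1) (N : ℕ) (hN : 1 ≤ N) :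
    ‖(N : ℂ)⁻¹ * ∑ n ∈ Icc 1 N, z ^ n‖ ≤ 1 := by
  have hN0 : (0:ℝ) < N := by exact_mod_cast hN
  rw [norm_mul, norm_inv, Complex.norm_natCast]
  have : ‖∑ n ∈ Icc 1 N, z ^ n‖ ≤ (N:ℝ) := by
    refine (norm_sum_le _ _).trans ?_
    have he : ∀ n ∈ Icc 1 N, ‖z ^ n‖ = 1 := fun n _ => by rw [norm_pow, hz, one_pow]
    rw [Finset.sum_congr rfl he, Finset.sum_const, Nat.card_Icc, nsmul_eq_mul, mul_one]
    simp
  calc (N:ℝ)⁻¹ * ‖∑ n ∈ Icc 1 N, z ^ n‖ ≤ (N:ℝ)⁻¹ * N := mul_le_mul_of_nonneg_left this (by positivity)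
  _ = 1 := by field_simp

lemma key_est (ε : ℝ) (hε : 0 < ε) (M Fm N N' : ℕ) (hM : 1 ≤ M)
    (hN : M ≤ N) (hN2 : N ≤ Fm) (hN' : M ≤ N') (hN'2 : N' ≤ Fm)
    (z : ℂ) (hz : ‖z‖ = 1)
    (hcase : ‖z - 1‖ ≤ ε / (4 * Fm) ∨ 8 / (ε * M) ≤ ‖z - 1‖) :
    ‖((N:ℂ)⁻¹ * ∑ n ∈ Icc 1 N, z ^ n) - ((N':ℂ)⁻¹ * ∑ n ∈ Icc 1 N', z ^ n)‖ ≤ ε / 2 := by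
  have hN1 : 1 ≤ N := hM.trans hN
  have hN'1 : 1 ≤ N' := hM.trans hN'
  have hFm1 : 1 ≤ Fm := hN1.trans hN2
  have hFm0 : (0:ℝ) < Fm := by exact_mod_cast hFm1
  have hM0 : (0:ℝ) < M := by exact_mod_cast hM
  have ht0 : (0:ℝ) ≤ ‖z - 1‖ := norm_nonneg _
  rcases hcase with hnear | hfar
  · have a1 := cN_sub_one_norm z hz N hN1
    have a2 := cN_sub_one_norm z hz N' hN'1
    have e1 : (N:ℝ) * ‖z - 1‖ ≤ ε / 4 := by
      have : (N:ℝ) * ‖z - 1‖ ≤ (Fm:ℝ) * (ε / (4 * Fm)) := by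
        apply mul_le_mul (by exact_mod_cast hN2) hnear ht0 (by positivity)
      calc (N:ℝ) * ‖z - 1‖ ≤ (Fm:ℝ) * (ε / (4 * Fm)) := this
      _ = ε / 4 := by field_simp
    have e2 : (N':ℝ) * ‖z - 1‖ ≤ ε / 4 := by
      have : (N':ℝ) * ‖z - 1‖ ≤ (Fm:ℝ) * (ε / (4 * Fm)) := by
        apply mul_le_mul (by exact_mod_cast hN'2) hnear ht0 (by positivity)
      calc (N':ℝ) * ‖z - 1‖ ≤ (Fm:ℝ) * (ε / (4 * Fm)) := this
      _ = ε / 4 := by field_simp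
    calc ‖((N:ℂ)⁻¹ * ∑ n ∈ Icc 1 N, z ^ n) - ((N':ℂ)⁻¹ * ∑ n ∈ Icc 1 N', z ^ n)‖
        = ‖(((N:ℂ)⁻¹ * ∑ n ∈ Icc 1 N, z ^ n) - 1) - (((N':ℂ)⁻¹ * ∑ n ∈ Icc 1 N', z ^ n) - 1)‖ := by
          congr 1; ring
    _ ≤ ‖((N:ℂ)⁻¹ * ∑ n ∈ Icc 1 N, z ^ n) - 1‖ + ‖((N':ℂ)⁻¹ * ∑ n ∈ Icc 1 N', z ^ n) - 1‖ :=
          norm_sub_le _ _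
    _ ≤ ε / 4 + ε / 4 := add_le_add (a1.trans e1) (a2.trans e2)
    _ = ε / 2 := by ring
  · have hδ0 : (0:ℝ) < 8 / (ε * M) := by positivity
    have ht : (0:ℝ) < ‖z - 1‖ := lt_of_lt_of_le hδ0 hfar
    have hz1 : z ≠ 1 := by
      intro h; rw [h] at ht; simp at ht
    have b1 := cN_norm_le z hz hz1 N hN1
    have b2 := cN_norm_le z hz hz1 N' hN'1
    have e1 : 2 / ((N:ℝ) * ‖z - 1‖) ≤ ε / 4 := by
      rw [div_le_div_iff₀ (by positivity) (by norm_num)]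
      have h1 : (M:ℝ) * (8 / (ε * M)) ≤ (N:ℝ) * ‖z - 1‖ := by
        apply mul_le_mul (by exact_mod_cast hN) hfar (le_of_lt hδ0) (by positivity)
      have h2 : (M:ℝ) * (8 / (ε * M)) = 8 / ε := by field_simp
      rw [h2] at h1
      have : 8 / ε * ε ≤ ((N:ℝ) * ‖z - 1‖) * ε := by
        apply mul_le_mul_of_nonneg_right h1 hε.le
      calc (2:ℝ) * 4 = 8 / ε * ε := by field_simp; ring
      _ ≤ ((N:ℝ) * ‖z - 1‖) * ε := this
      _ = ε * ((N:ℝ) * ‖z - 1‖) := by ring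
    have e2 : 2 / ((N':ℝ) * ‖z - 1‖) ≤ ε / 4 := by
      rw [div_le_div_iff₀ (by positivity) (by norm_num)]
      have h1 : (M:ℝ) * (8 / (ε * M)) ≤ (N':ℝ) * ‖z - 1‖ := by
        apply mul_le_mul (by exact_mod_cast hN') hfar (le_of_lt hδ0) (by positivity)
      have h2 : (M:ℝ) * (8 / (ε * M)) = 8 / ε := by field_simp
      rw [h2] at h1
      have : 8 / ε * ε ≤ ((N':ℝ) * ‖z - 1‖) * ε := by
        apply mul_le_mul_of_nonneg_right h1 hε.le
      calc (2:ℝ) * 4 = 8 / ε * ε := by field_simp; ring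
      _ ≤ ((N':ℝ) * ‖z - 1‖) * ε := this
      _ = ε * ((N':ℝ) * ‖z - 1‖) := by ring
    calc ‖((N:ℂ)⁻¹ * ∑ n ∈ Icc 1 N, z ^ n) - ((N':ℂ)⁻¹ * ∑ n ∈ Icc 1 N', z ^ n)‖
        ≤ ‖(N:ℂ)⁻¹ * ∑ n ∈ Icc 1 N, z ^ n‖ + ‖(N':ℂ)⁻¹ * ∑ n ∈ Icc 1 N', z ^ n‖ :=
          norm_sub_le _ _
    _ ≤ ε / 4 + ε / 4 := add_le_add (b1.trans e1) (b2.trans e2)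
    _ = ε / 2 := by ring

lemma enorm_sq_le {x : ℂ} {c : ℝ} (hc : 0 ≤ c) (hx : ‖x‖ ≤ c) :
    (‖x‖₊ : ℝ≥0∞) ^ (2:ℝ) ≤ ENNReal.ofReal (c ^ 2) := by
  have h1 : (‖x‖₊ : ℝ≥0∞) ^ (2:ℝ) ≤ (ENNReal.ofReal c) ^ (2:ℝ) := by
    refine ENNReal.rpow_le_rpow ?_ (by norm_num)
    rw [← ENNReal.ofReal_coe_nnreal, coe_nnnorm]
    exact ENNReal.ofReal_le_ofReal hx
  refine h1.trans_eq ?_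
  rw [ENNReal.ofReal_rpow_of_nonneg hc (by norm_num)]
  congr 1
  rw [show (2:ℝ) = ((2:ℕ):ℝ) by norm_num, Real.rpow_natCast]

/-- **Quantitative von Neumann mean ergodic theorem** for multiplication operators on the
unit circle: a uniform bound (independent of the measure and the function) on the rate of
metastability of the ergodic averages. -/
theorem stmt_7 (ε : ℝ) (hε : 0 < ε) (F : ℕ → ℕ) :
    ∃ (K : ℕ) (M : Fin K → ℕ), (∀ i, 1 ≤ M i) ∧
      ∀ (μ : Measure {z : ℂ // ‖z‖ = 1}) (f : {z : ℂ // ‖z‖ = 1} → ℂ),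
        MemLp f 2 μ → eLpNorm f 2 μ ≤ 1 →
        ∃ i : Fin K, ∀ N N' : ℕ, M i ≤ N → N ≤ F (M i) → M i ≤ N' → N' ≤ F (M i) →
          eLpNorm (fun z : {z : ℂ // ‖z‖ = 1} =>
              (N : ℂ)⁻¹ * ∑ n ∈ Finset.Icc 1 N, (z.1 : ℂ) ^ n * f z
              - (N' : ℂ)⁻¹ * ∑ n ∈ Finset.Icc 1 N', (z.1 : ℂ) ^ n * f z) 2 μ
            < ENNReal.ofReal ε := by
  classical
  set F' : ℕ → ℕ := fun n => max (F n) n with hF'def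
  set K : ℕ := ⌊8 / ε ^ 2⌋₊ + 1 with hKdef
  have hKpos : 0 < K := Nat.succ_pos _
  have hKR : (8 / ε ^ 2 : ℝ) < K := by
    have h := Nat.lt_floor_add_one (8 / ε ^ 2 : ℝ)
    rw [hKdef]; push_cast; linarith
  have hKRpos : (0:ℝ) < K := lt_trans (by positivity) hKR
  -- the recursive sequence of thresholds
  obtain ⟨m, hm⟩ : ∃ m : ℕ → ℕ, m = fun n =>
      Nat.rec 1 (fun _ prev => ⌈(32 * (F' prev : ℝ) / ε ^ 2)⌉₊ + prev + 1) n := ⟨_, rfl⟩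
  have hm0 : m 0 = 1 := by simp [hm]
  have hmsucc : ∀ n, m (n + 1) = ⌈(32 * (F' (m n) : ℝ) / ε ^ 2)⌉₊ + m n + 1 := fun n => by
    simp only [hm]
  have hm1 : ∀ n, 1 ≤ m n := by
    intro n; induction n with
    | zero => simp [hm0]
    | succ n ih => rw [hmsucc]; omega
  have hmono : Monotone m := by
    refine monotone_nat_of_le_succ fun n => ?_
    rw [hmsucc]; omega
  have hmpos : ∀ n, (0:ℝ) < (m n : ℝ) := fun n => by
    have h : 0 < m n := hm1 n
    exact_mod_cast h
  have hF'pos : ∀ n, (0:ℝ) < F' (m n) := fun n => by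
    have : 1 ≤ F' (m n) := le_trans (hm1 n) (le_max_right _ _)
    exact_mod_cast this
  have hrec : ∀ n, 32 * (F' (m n) : ℝ) / ε ^ 2 < m (n + 1) := by
    intro n
    rw [hmsucc]
    have h := Nat.le_ceil (32 * (F' (m n) : ℝ) / ε ^ 2)
    push_cast
    linarith
  set δ : ℕ → ℝ := fun n => 8 / (ε * m n) with hδdef
  set η : ℕ → ℝ := fun n => ε / (4 * F' (m n)) with hηdef
  have hδpos : ∀ n, 0 < δ n := fun n => by
    rw [hδdef]; have := hmpos n; positivity
  have hηpos : ∀ n, 0 < η n := fun n => by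
    rw [hηdef]; have := hF'pos n; positivity
  have hδη : ∀ n, δ (n + 1) ≤ η n := by
    intro n
    rw [hδdef, hηdef]
    rw [div_le_div_iff₀ (by have := hmpos (n+1); positivity) (by have := hF'pos n; positivity)]
    have h1 := hrec n
    have h2 : 32 * (F' (m n) : ℝ) ≤ ε ^ 2 * m (n + 1) := by
      rw [div_lt_iff₀ (by positivity)] at h1
      nlinarith
    nlinarith [hF'pos n, hmpos (n+1)]
  have hδmono : ∀ i j : ℕ, i ≤ j → δ j ≤ δ i := by
    intro i j hij
    rw [hδdef]
    have hmi : (m i : ℝ) ≤ m j := by exact_mod_cast hmono hij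
    have h0 : (0:ℝ) < ε * m i := by have := hmpos i; positivity
    apply div_le_div_of_nonneg_left (by norm_num) h0
    have := hmpos i
    nlinarith
  have hδη' : ∀ i j : ℕ, i < j → δ j ≤ η i := fun i j hij =>
    le_trans (hδmono (i+1) j hij) (hδη i)
  -- bad arcs
  set B : ℕ → Set {z : ℂ // ‖z‖ = 1} := fun n => {z : {z : ℂ // ‖z‖ = 1} | η n < ‖(z.1 : ℂ) - 1‖ ∧ ‖(z.1 : ℂ) - 1‖ < δ n}
    with hBdef
  have hBmeas : ∀ n, MeasurableSet (B n) := by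
    intro n
    have hc : Continuous fun w : ℂ => ‖w - 1‖ := (continuous_id.sub continuous_const).norm
    have hC : MeasurableSet {w : ℂ | η n < ‖w - 1‖ ∧ ‖w - 1‖ < δ n} := by
      have he : {w : ℂ | η n < ‖w - 1‖ ∧ ‖w - 1‖ < δ n}
          = (fun w : ℂ => ‖w - 1‖) ⁻¹' Set.Ioo (η n) (δ n) := rfl
      rw [he]
      exact hc.measurable measurableSet_Ioo
    have he2 : B n = Subtype.val ⁻¹' {w : ℂ | η n < ‖w - 1‖ ∧ ‖w - 1‖ < δ n} := rfl
    rw [he2]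
    exact hC.preimage measurable_subtype_coe
  have hBdisj : ∀ i j : ℕ, i < j → ∀ z : {z : ℂ // ‖z‖ = 1}, z ∈ B i → z ∈ B j → False := by
    intro i j hij z hzi hzj
    have h1 : η i < ‖(z.1 : ℂ) - 1‖ := hzi.1
    have h2 : ‖(z.1 : ℂ) - 1‖ < δ j := hzj.2
    have := hδη' i j hij
    linarith
  refine ⟨K, fun i => m i, fun i => hm1 i, ?_⟩
  intro μ f hmem hnorm
  set h : {z : ℂ // ‖z‖ = 1} → ℝ≥0∞ := fun z => (‖f z‖₊ : ℝ≥0∞) ^ (2:ℝ) with hhdef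
  have hhae : AEMeasurable h μ :=
    ENNReal.continuous_rpow_const.measurable.comp_aemeasurable
      hmem.aestronglyMeasurable.enorm
  have hint : ∫⁻ z, h z ∂μ ≤ 1 := by
    have h2 : eLpNorm f 2 μ = (∫⁻ z, h z ∂μ) ^ ((1:ℝ) / 2) := by
      rw [eLpNorm_eq_lintegral_rpow_enorm_toReal (by norm_num) (by norm_num), hhdef]
      norm_num
      simp only [enorm_eq_nnnorm]
    rw [h2] at hnorm
    have h3 := ENNReal.rpow_le_rpow hnorm (by norm_num : (0:ℝ) ≤ 2)
    rwa [← ENNReal.rpow_mul, ENNReal.one_rpow, one_div,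
      inv_mul_cancel₀ (by norm_num : (2:ℝ) ≠ 0), ENNReal.rpow_one] at h3
  -- pigeonhole
  have hsum : ∑ i : Fin K, ∫⁻ z, (B i).indicator h z ∂μ ≤ 1 := by
    have hswap := lintegral_finset_sum' (μ := μ) (Finset.univ : Finset (Fin K))
      (f := fun (i : Fin K) (z : {z : ℂ // ‖z‖ = 1}) => (B (i : ℕ)).indicator h z)
      (fun i _ => hhae.indicator (hBmeas (i : ℕ)))
    rw [← hswap]
    refine le_trans (lintegral_mono fun z => ?_) hint
    by_cases hzB : ∃ j : Fin K, z ∈ B (j : ℕ)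
    · obtain ⟨j, hj⟩ := hzB
      have hz0 : ∀ i ∈ Finset.univ, i ≠ j → (B ((i : Fin K) : ℕ)).indicator h z = 0 := by
        intro i _ hij
        apply Set.indicator_of_notMem
        intro hzi
        rcases lt_or_gt_of_ne (fun hh : (i : ℕ) = (j : ℕ) => hij (Fin.ext hh)) with hlt | hgt
        · exact hBdisj _ _ hlt z hzi hj
        · exact hBdisj _ _ hgt z hj hzi
      rw [Finset.sum_eq_single_of_mem j (Finset.mem_univ j) hz0]
      by_cases hz : z ∈ B (j : ℕ)
      · rw [Set.indicator_of_mem hz]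
      · rw [Set.indicator_of_notMem hz]; exact zero_le
    · push_neg at hzB
      rw [Finset.sum_eq_zero fun i _ => Set.indicator_of_notMem (hzB i) h]
      exact zero_le
  have hNe : Nonempty (Fin K) := ⟨⟨0, hKpos⟩⟩
  have hpigeon : ∃ i : Fin K, ∫⁻ z, (B (i : ℕ)).indicator h z ∂μ ≤ (K : ℝ≥0∞)⁻¹ := by
    obtain ⟨i, -, hmin⟩ := Finset.exists_min_image Finset.univ
      (fun i : Fin K => ∫⁻ z, (B (i : ℕ)).indicator h z ∂μ) Finset.univ_nonempty
    refine ⟨i, ?_⟩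
    have hcard : (Finset.univ : Finset (Fin K)).card
        • (∫⁻ z, (B (i : ℕ)).indicator h z ∂μ)
        ≤ ∑ j : Fin K, ∫⁻ z, (B (j : ℕ)).indicator h z ∂μ :=
      Finset.card_nsmul_le_sum Finset.univ _ _ fun j _ => hmin j (Finset.mem_univ j)
    rw [Finset.card_univ, Fintype.card_fin, nsmul_eq_mul] at hcard
    have hK1 : (∫⁻ z, (B (i : ℕ)).indicator h z ∂μ) * (K : ℝ≥0∞) ≤ 1 := by
      rw [mul_comm]; exact hcard.trans hsum
    have hK2 := (ENNReal.le_div_iff_mul_le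
      (Or.inl (by exact_mod_cast hKpos.ne' : (K:ℝ≥0∞) ≠ 0))
      (Or.inl (ENNReal.natCast_ne_top K))).mpr hK1
    rwa [one_div] at hK2
  obtain ⟨i, hi⟩ := hpigeon
  refine ⟨i, ?_⟩
  intro N N' hN hNF hN' hN'F
  have hN1 : 1 ≤ N := (hm1 i).trans hN
  have hN'1 : 1 ≤ N' := (hm1 i).trans hN'
  have hFm1 : 1 ≤ F (m i) := hN1.trans hNF
  have hFmpos : (0:ℝ) < F (m i) := by exact_mod_cast hFm1
  -- pointwise bound
  have hpt : ∀ z : {z : ℂ // ‖z‖ = 1},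
      (‖(N : ℂ)⁻¹ * ∑ n ∈ Finset.Icc 1 N, (z.1 : ℂ) ^ n * f z
        - (N' : ℂ)⁻¹ * ∑ n ∈ Finset.Icc 1 N', (z.1 : ℂ) ^ n * f z‖₊ : ℝ≥0∞) ^ (2:ℝ)
      ≤ ENNReal.ofReal (ε ^ 2 / 4) * h z
        + (B (i : ℕ)).indicator (fun z => 4 * h z) z := by
    intro z
    have hz1 : ‖(z.1 : ℂ)‖ = 1 := z.2
    have hgz : (N : ℂ)⁻¹ * ∑ n ∈ Finset.Icc 1 N, (z.1 : ℂ) ^ n * f z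
        - (N' : ℂ)⁻¹ * ∑ n ∈ Finset.Icc 1 N', (z.1 : ℂ) ^ n * f z
        = (((N : ℂ)⁻¹ * ∑ n ∈ Finset.Icc 1 N, (z.1 : ℂ) ^ n)
           - ((N' : ℂ)⁻¹ * ∑ n ∈ Finset.Icc 1 N', (z.1 : ℂ) ^ n)) * f z := by
      rw [← Finset.sum_mul, ← Finset.sum_mul]; ring
    set c : ℂ := ((N : ℂ)⁻¹ * ∑ n ∈ Finset.Icc 1 N, (z.1 : ℂ) ^ n)
      - ((N' : ℂ)⁻¹ * ∑ n ∈ Finset.Icc 1 N', (z.1 : ℂ) ^ n) with hcdef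
    rw [hgz]
    have hmul : (‖c * f z‖₊ : ℝ≥0∞) ^ (2:ℝ)
        = (‖c‖₊ : ℝ≥0∞) ^ (2:ℝ) * (‖f z‖₊ : ℝ≥0∞) ^ (2:ℝ) := by
      rw [nnnorm_mul, ENNReal.coe_mul, ENNReal.mul_rpow_of_nonneg _ _ (by norm_num)]
    rw [hmul]
    by_cases hzB : z ∈ B (i : ℕ)
    · -- crude bound by 4
      have hc2 : ‖c‖ ≤ 2 := by
        rw [hcdef]
        refine (norm_sub_le _ _).trans ?_
        have b1 := cN_norm_le_one (z.1 : ℂ) hz1 N hN1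
        have b2 := cN_norm_le_one (z.1 : ℂ) hz1 N' hN'1
        linarith
      have hcsq : (‖c‖₊ : ℝ≥0∞) ^ (2:ℝ) ≤ ENNReal.ofReal ((2:ℝ) ^ 2) :=
        enorm_sq_le (by norm_num) hc2
      have h4 : ENNReal.ofReal ((2:ℝ) ^ 2) = 4 := by
        norm_num
      rw [Set.indicator_of_mem hzB]
      calc (‖c‖₊ : ℝ≥0∞) ^ (2:ℝ) * (‖f z‖₊ : ℝ≥0∞) ^ (2:ℝ)
          ≤ 4 * (‖f z‖₊ : ℝ≥0∞) ^ (2:ℝ) := by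
            rw [← h4]; exact mul_le_mul_left hcsq _
      _ ≤ ENNReal.ofReal (ε ^ 2 / 4) * h z + 4 * h z := le_add_self
    · -- fine bound by ε/2
      have hcase : ‖(z.1 : ℂ) - 1‖ ≤ ε / (4 * F (m i))
          ∨ 8 / (ε * m i) ≤ ‖(z.1 : ℂ) - 1‖ := by
        have hz' : ¬(η i < ‖(z.1 : ℂ) - 1‖ ∧ ‖(z.1 : ℂ) - 1‖ < δ i) := hzB
        push_neg at hz'
        rcases le_or_gt ‖(z.1 : ℂ) - 1‖ (η i) with h1 | h1
        · left
          refine h1.trans ?_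
          have hF : (F (m i) : ℝ) ≤ F' (m i) := by
            exact_mod_cast le_max_left (F (m i)) (m i)
          have h4 : (0:ℝ) < 4 * (F (m i) : ℝ) := by nlinarith [hFmpos]
          have h5 : (4:ℝ) * (F (m i) : ℝ) ≤ 4 * (F' (m i) : ℝ) := by nlinarith
          rw [hηdef]
          exact div_le_div_of_nonneg_left hε.le h4 h5
        · right
          have := hz' h1
          rw [hδdef] at this
          exact this
      have hc : ‖c‖ ≤ ε / 2 := by
        rw [hcdef]
        exact key_est ε hε (m i) (F (m i)) N N' (hm1 i) hN hNF hN' hN'F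
          (z.1 : ℂ) hz1 hcase
      have hcsq : (‖c‖₊ : ℝ≥0∞) ^ (2:ℝ) ≤ ENNReal.ofReal ((ε / 2) ^ 2) :=
        enorm_sq_le (by positivity) hc
      have heq : ENNReal.ofReal ((ε / 2) ^ 2) = ENNReal.ofReal (ε ^ 2 / 4) := by
        congr 1; ring
      rw [Set.indicator_of_notMem hzB]
      calc (‖c‖₊ : ℝ≥0∞) ^ (2:ℝ) * (‖f z‖₊ : ℝ≥0∞) ^ (2:ℝ)
          ≤ ENNReal.ofReal (ε ^ 2 / 4) * (‖f z‖₊ : ℝ≥0∞) ^ (2:ℝ) := by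
            rw [← heq]; exact mul_le_mul_left hcsq _
      _ = ENNReal.ofReal (ε ^ 2 / 4) * h z + 0 := by rw [add_zero]
  -- integrate the pointwise bound
  have hTle : ∫⁻ z, (‖(N : ℂ)⁻¹ * ∑ n ∈ Finset.Icc 1 N, (z.1 : ℂ) ^ n * f z
        - (N' : ℂ)⁻¹ * ∑ n ∈ Finset.Icc 1 N', (z.1 : ℂ) ^ n * f z‖₊ : ℝ≥0∞) ^ (2:ℝ) ∂μ
      ≤ ENNReal.ofReal (ε ^ 2 / 4) + 4 * (K : ℝ≥0∞)⁻¹ := by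
    refine le_trans (lintegral_mono fun z => hpt z) ?_
    rw [lintegral_add_left' (hhae.const_mul _)]
    have e1 : ∫⁻ z, ENNReal.ofReal (ε ^ 2 / 4) * h z ∂μ
        ≤ ENNReal.ofReal (ε ^ 2 / 4) := by
      rw [lintegral_const_mul' _ _ ENNReal.ofReal_ne_top]
      calc ENNReal.ofReal (ε ^ 2 / 4) * ∫⁻ z, h z ∂μ
          ≤ ENNReal.ofReal (ε ^ 2 / 4) * 1 := mul_le_mul_right hint _
      _ = _ := mul_one _
    have e2 : ∫⁻ z, (B (i : ℕ)).indicator (fun z => 4 * h z) z ∂μ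
        ≤ 4 * (K : ℝ≥0∞)⁻¹ := by
      have hind : ∀ z, (B (i : ℕ)).indicator (fun z => 4 * h z) z
          = 4 * (B (i : ℕ)).indicator h z := by
        intro z
        by_cases hz : z ∈ B (i : ℕ) <;>
          simp [Set.indicator_of_mem, Set.indicator_of_notMem, hz]
      simp_rw [hind]
      rw [lintegral_const_mul' _ _ (by norm_num)]
      exact mul_le_mul_right hi _
    exact add_le_add e1 e2
  have hfinal : ENNReal.ofReal (ε ^ 2 / 4) + 4 * (K : ℝ≥0∞)⁻¹
      < ENNReal.ofReal (ε ^ 2) := by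
    have h4K : (4 : ℝ≥0∞) * (K : ℝ≥0∞)⁻¹ = ENNReal.ofReal (4 / (K : ℝ)) := by
      rw [ENNReal.ofReal_div_of_pos hKRpos, ← div_eq_mul_inv]
      norm_num [ENNReal.ofReal_natCast]
    rw [h4K, ← ENNReal.ofReal_add (by positivity) (by positivity)]
    rw [ENNReal.ofReal_lt_ofReal_iff (by positivity)]
    have h8 : 8 < ε ^ 2 * K := by
      have h1 : (8 / ε ^ 2) * ε ^ 2 < (K : ℝ) * ε ^ 2 :=
        mul_lt_mul_of_pos_right hKR (by positivity)
      have h2 : (8 / ε ^ 2) * ε ^ 2 = 8 := by field_simp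
      linarith
    have h42 : 4 / (K : ℝ) < ε ^ 2 / 2 := by
      rw [div_lt_div_iff₀ hKRpos (by norm_num)]
      linarith
    have hε2 : (0:ℝ) < ε ^ 2 := by positivity
    linarith
  -- conclude
  rw [eLpNorm_eq_lintegral_rpow_enorm_toReal (by norm_num) (by norm_num)]
  have htoReal : ((2 : ℝ≥0∞)).toReal = (2:ℝ) := by norm_num
  rw [htoReal]
  have hT : ∫⁻ z, (‖(N : ℂ)⁻¹ * ∑ n ∈ Finset.Icc 1 N, (z.1 : ℂ) ^ n * f z
        - (N' : ℂ)⁻¹ * ∑ n ∈ Finset.Icc 1 N', (z.1 : ℂ) ^ n * f z‖₊ : ℝ≥0∞) ^ (2:ℝ) ∂μ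
      < ENNReal.ofReal (ε ^ 2) := lt_of_le_of_lt hTle hfinal
  calc (∫⁻ z, (‖(N : ℂ)⁻¹ * ∑ n ∈ Finset.Icc 1 N, (z.1 : ℂ) ^ n * f z
        - (N' : ℂ)⁻¹ * ∑ n ∈ Finset.Icc 1 N', (z.1 : ℂ) ^ n * f z‖₊ : ℝ≥0∞) ^ (2:ℝ) ∂μ)
          ^ ((1:ℝ)/2)
      < (ENNReal.ofReal (ε ^ 2)) ^ ((1:ℝ)/2) := ENNReal.rpow_lt_rpow hT (by norm_num)
  _ = ENNReal.ofReal ε := by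
      rw [ENNReal.ofReal_rpow_of_nonneg (by positivity) (by norm_num)]
      congr 1
      rw [← Real.rpow_natCast ε 2, ← Real.rpow_mul hε.le]
      norm_num
end

section
/- Let (A,≤) be a directed preordered set, let δ>0, let ω, ψ: A→A be arbitrary functions, and let M_•∈A. Set K := ⌈2δ^{−2}⌉. Then there exist M_1,…,M_K∈A with M_• ≤ M_1 ≤ M_2 ≤ ⋯ ≤ M_K such that the following holds. Let η: (0,∞)→(0,∞) be any function and define real constants C_K := 1 and C_{i−1} := max(C_i, 2/η(C_i)) for i = K,…,2. Let H be a real Hilbert space and let (p_α)_{α∈A} be a family of extended seminorms on H whose dual extended seminorms decrease monotonically, i.e., α ≤ β implies p_β*(u) ≤ p_α*(u) for all u∈H. Then for every f∈H with ‖f‖ ≤ 1 there exist i∈{1,…,K}, indices α,β∈A with ω(α) ≤ M_i and ψ(M_i) ≤ β, and a decomposition f = σ + u + v such that p_β(σ) < C_i, p_α*(u) < η(C_i), and ‖v‖ < δ. -/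
open Filter
open scoped ENNReal RealInnerProductSpace

/-- The decreasing sequence of constants from the Structure Theorem, read backwards:
`Cseq η 0 = C_K = 1` and `C_{i-1} = max (C_i) (2 / η (C_i))`, i.e. `C_i = Cseq η (K - i)`. -/
noncomputable def Cseq (η : ℝ → ℝ) : ℕ → ℝ
  | 0 => 1
  | m + 1 => max (Cseq η m) (2 / η (Cseq η m))

/-- An extended seminorm on a real Hilbert space. -/
def IsExtSeminorm {H : Type} [NormedAddCommGroup H] [InnerProductSpace ℝ H]
    (p : H → ℝ≥0∞) : Prop :=
  p 0 = 0 ∧ (∀ x y, p (x + y) ≤ p x + p y) ∧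
    ∀ l : ℝ, l ≠ 0 → ∀ x, p (l • x) = ENNReal.ofReal |l| * p x

/-- The dual extended seminorm `p*(f) = sup { |⟪f,φ⟫| : p φ ≤ 1 }`. -/
noncomputable def dualExtSeminorm {H : Type} [NormedAddCommGroup H] [InnerProductSpace ℝ H]
    (p : H → ℝ≥0∞) (f : H) : ℝ≥0∞ :=
  ⨆ (φ : H) (_ : p φ ≤ 1), ENNReal.ofReal |⟪f, φ⟫|

lemma Cseq_one_le (η : ℝ → ℝ) : ∀ m, 1 ≤ Cseq η m
  | 0 => le_refl 1
  | m + 1 => le_trans (Cseq_one_le η m) (le_max_left _ _)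

lemma Cseq_mono (η : ℝ → ℝ) : Monotone (Cseq η) :=
  monotone_nat_of_le_succ fun _ => le_max_left _ _

lemma Cseq_succ (η : ℝ → ℝ) (m : ℕ) :
    Cseq η (m + 1) = max (Cseq η m) (2 / η (Cseq η m)) := rfl

variable {H : Type} [NormedAddCommGroup H] [InnerProductSpace ℝ H]

lemma isExtSeminorm_dual (p : H → ℝ≥0∞) : IsExtSeminorm (dualExtSeminorm p) := by
  have hle : ∀ (l : ℝ) (x : H),
      dualExtSeminorm p (l • x) ≤ ENNReal.ofReal |l| * dualExtSeminorm p x := by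
    intro l x
    refine iSup₂_le fun φ hφ => ?_
    rw [real_inner_smul_left, abs_mul, ENNReal.ofReal_mul (abs_nonneg l)]
    have : ENNReal.ofReal |⟪x, φ⟫| ≤ dualExtSeminorm p x := le_iSup₂_of_le φ hφ le_rfl
    exact mul_le_mul_right this _
  refine ⟨?_, ?_, ?_⟩
  · refine le_antisymm (iSup₂_le fun φ _ => ?_) zero_le
    simp
  · intro x y
    refine iSup₂_le fun φ hφ => ?_
    calc ENNReal.ofReal |⟪x + y, φ⟫|
        ≤ ENNReal.ofReal (|⟪x, φ⟫| + |⟪y, φ⟫|) := by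
          refine ENNReal.ofReal_le_ofReal ?_
          rw [inner_add_left]; exact abs_add_le _ _
      _ ≤ ENNReal.ofReal |⟪x, φ⟫| + ENNReal.ofReal |⟪y, φ⟫| := ENNReal.ofReal_add_le
      _ ≤ _ := add_le_add (le_iSup₂_of_le φ hφ le_rfl) (le_iSup₂_of_le φ hφ le_rfl)
  · intro l hl x
    refine le_antisymm (hle l x) ?_
    have h2 := hle l⁻¹ (l • x)
    rw [smul_smul, inv_mul_cancel₀ hl, one_smul] at h2
    calc ENNReal.ofReal |l| * dualExtSeminorm p x
        ≤ ENNReal.ofReal |l| * (ENNReal.ofReal |l⁻¹| * dualExtSeminorm p (l • x)) :=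
          mul_le_mul_right h2 _
      _ = (ENNReal.ofReal |l| * ENNReal.ofReal |l⁻¹|) * dualExtSeminorm p (l • x) :=
          (mul_assoc _ _ _).symm
      _ = dualExtSeminorm p (l • x) := by
          rw [← ENNReal.ofReal_mul (abs_nonneg l), ← abs_mul, mul_inv_cancel₀ hl]
          simp

lemma extSeminorm_neg {p : H → ℝ≥0∞} (hp : IsExtSeminorm p) (x : H) : p (-x) = p x := by
  have := hp.2.2 (-1) (by norm_num) x
  simpa using this

lemma extSeminorm_combo {p : H → ℝ≥0∞} (hp : IsExtSeminorm p) {C : ℝ≥0∞} (hC : C ≠ ⊤)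
    {x y : H} (hx : p x < C) (hy : p y < C) {a b : ℝ} (ha : 0 ≤ a) (hb : 0 ≤ b)
    (hab : a + b = 1) : p (a • x + b • y) < C := by
  rcases eq_or_lt_of_le ha with ha0 | ha0
  · have hb1 : b = 1 := by linarith
    rw [← ha0, hb1, zero_smul, zero_add, one_smul]; exact hy
  rcases eq_or_lt_of_le hb with hb0 | hb0
  · have ha1 : a = 1 := by linarith
    rw [← hb0, ha1, zero_smul, add_zero, one_smul]; exact hx
  have hane : ENNReal.ofReal a ≠ 0 := by
    simp [ENNReal.ofReal_eq_zero, not_le, ha0]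
  have hbne : ENNReal.ofReal b ≠ 0 := by
    simp [ENNReal.ofReal_eq_zero, not_le, hb0]
  calc p (a • x + b • y) ≤ p (a • x) + p (b • y) := hp.2.1 _ _
    _ = ENNReal.ofReal a * p x + ENNReal.ofReal b * p y := by
        rw [hp.2.2 a (ne_of_gt ha0), hp.2.2 b (ne_of_gt hb0),
          abs_of_pos ha0, abs_of_pos hb0]
    _ < ENNReal.ofReal a * C + ENNReal.ofReal b * C :=
        ENNReal.add_lt_add ((ENNReal.mul_lt_mul_iff_right hane ENNReal.ofReal_ne_top).mpr hx)
          ((ENNReal.mul_lt_mul_iff_right hbne ENNReal.ofReal_ne_top).mpr hy)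
    _ = C := by
        rw [← add_mul, ← ENNReal.ofReal_add ha hb, hab, ENNReal.ofReal_one, one_mul]

lemma mul_le_one_of_forall {t C : ℝ} (ht : 0 ≤ t) (hC : 0 < C)
    (h : ∀ c, 0 < c → c < C → c * t < 1) : C * t ≤ 1 := by
  by_contra hcon
  push_neg at hcon
  have ht0 : 0 < t := by nlinarith
  have hinv : t⁻¹ < C := by
    rw [← one_div, div_lt_iff₀ ht0]; nlinarith
  have hipos : 0 < t⁻¹ := inv_pos.mpr ht0
  have h2 := h ((t⁻¹ + C) / 2) (by positivity) (by linarith)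
  have h3 : t⁻¹ < (t⁻¹ + C) / 2 := by linarith
  have : 1 < ((t⁻¹ + C) / 2) * t := by
    calc (1 : ℝ) = t⁻¹ * t := (inv_mul_cancel₀ (ne_of_gt ht0)).symm
      _ < ((t⁻¹ + C) / 2) * t := mul_lt_mul_of_pos_right h3 ht0
  linarith

lemma sep_zeta {H : Type} [NormedAddCommGroup H] [InnerProductSpace ℝ H] [CompleteSpace H]
    {p q : H → ℝ≥0∞} (hp : IsExtSeminorm p) (hq : IsExtSeminorm q)
    {C e d : ℝ} (hC : 0 < C) (he : 0 < e) (hd : 0 < d) {f : H}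
    (hno : ¬ ∃ σ u v : H, f = σ + u + v ∧ p σ < ENNReal.ofReal C ∧
      q u < ENNReal.ofReal e ∧ ‖v‖ < d) :
    ∃ ζ : H, ⟪ζ, f⟫ = 1 ∧ (∀ φ, p φ ≤ 1 → C * |⟪ζ, φ⟫| ≤ 1) ∧
      (∀ u, q u ≤ 1 → e * |⟪ζ, u⟫| ≤ 1) ∧ d * ‖ζ‖ ≤ 1 := by
  set W : Set H := {x | ∃ σ u, p σ < ENNReal.ofReal C ∧ q u < ENNReal.ofReal e ∧
    ‖x - σ - u‖ < d} with hWdef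
  have h0W : (0 : H) ∈ W := by
    refine ⟨0, 0, ?_, ?_, ?_⟩
    · rw [hp.1]; exact ENNReal.ofReal_pos.mpr hC
    · rw [hq.1]; exact ENNReal.ofReal_pos.mpr he
    · simpa using hd
  have hopen : IsOpen W := by
    rw [Metric.isOpen_iff]
    rintro x ⟨σ, u, h1, h2, h3⟩
    refine ⟨d - ‖x - σ - u‖, by linarith, fun y hy => ⟨σ, u, h1, h2, ?_⟩⟩
    rw [Metric.mem_ball, dist_eq_norm] at hy
    have hxy : y - σ - u = (y - x) + (x - σ - u) := by abel
    rw [hxy]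
    calc ‖(y - x) + (x - σ - u)‖ ≤ ‖y - x‖ + ‖x - σ - u‖ := norm_add_le _ _
      _ < d := by linarith
  have hconv : Convex ℝ W := by
    rintro x ⟨σx, ux, hx1, hx2, hx3⟩ y ⟨σy, uy, hy1, hy2, hy3⟩ a b ha hb hab
    refine ⟨a • σx + b • σy, a • ux + b • uy,
      extSeminorm_combo hp ENNReal.ofReal_ne_top hx1 hy1 ha hb hab,
      extSeminorm_combo hq ENNReal.ofReal_ne_top hx2 hy2 ha hb hab, ?_⟩
    have hXY : (a • x + b • y) - (a • σx + b • σy) - (a • ux + b • uy)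
        = a • (x - σx - ux) + b • (y - σy - uy) := by
      rw [smul_sub, smul_sub, smul_sub, smul_sub]; abel
    rw [hXY]
    calc ‖a • (x - σx - ux) + b • (y - σy - uy)‖
        ≤ ‖a • (x - σx - ux)‖ + ‖b • (y - σy - uy)‖ := norm_add_le _ _
      _ = a * ‖x - σx - ux‖ + b * ‖y - σy - uy‖ := by
          rw [norm_smul, norm_smul, Real.norm_eq_abs, Real.norm_eq_abs,
            abs_of_nonneg ha, abs_of_nonneg hb]
      _ < d := by
          rcases eq_or_lt_of_le ha with ha0 | ha0
          · have hb1 : b = 1 := by linarith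
            rw [← ha0, hb1]; simpa using hy3
          · have h1 : a * ‖x - σx - ux‖ < a * d := by
              exact mul_lt_mul_of_pos_left hx3 ha0
            have h2 : b * ‖y - σy - uy‖ ≤ b * d := by
              exact mul_le_mul_of_nonneg_left (le_of_lt hy3) hb
            nlinarith
  have hfW : f ∉ W := by
    rintro ⟨σ, u, h1, h2, h3⟩
    exact hno ⟨σ, u, f - σ - u, by abel, h1, h2, h3⟩
  obtain ⟨L, hL⟩ := geometric_hahn_banach_open_point hconv hopen hfW
  have hLf : 0 < L f := by have := hL 0 h0W; simpa using this
  set ζ : H := (L f)⁻¹ • (InnerProductSpace.toDual ℝ H).symm L with hζdef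
  have hinner : ∀ x : H, ⟪ζ, x⟫ = (L f)⁻¹ * L x := by
    intro x
    rw [hζdef, real_inner_smul_left, InnerProductSpace.toDual_symm_apply]
  have hWneg : ∀ x ∈ W, -x ∈ W := by
    rintro x ⟨σ, u, h1, h2, h3⟩
    refine ⟨-σ, -u, by rwa [extSeminorm_neg hp], by rwa [extSeminorm_neg hq], ?_⟩
    have : -x - -σ - -u = -(x - σ - u) := by abel
    rw [this, norm_neg]; exact h3
  have habs : ∀ x ∈ W, |⟪ζ, x⟫| < 1 := by
    intro x hx
    have h1 := hL x hx
    have h2 := hL (-x) (hWneg x hx)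
    rw [map_neg] at h2
    have hax : |L x| < L f := abs_lt.mpr ⟨by linarith, h1⟩
    rw [hinner, abs_mul, abs_of_pos (inv_pos.mpr hLf)]
    rw [inv_mul_eq_div, div_lt_one hLf]
    exact hax
  refine ⟨ζ, ?_, ?_, ?_, ?_⟩
  · rw [hinner, inv_mul_cancel₀ (ne_of_gt hLf)]
  · intro φ hφ
    refine mul_le_one_of_forall (abs_nonneg _) hC fun c hc0 hcC => ?_
    have hmem : c • φ ∈ W := by
      refine ⟨c • φ, 0, ?_, ?_, by simpa using hd⟩
      · calc p (c • φ) = ENNReal.ofReal c * p φ := by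
              rw [hp.2.2 c (ne_of_gt hc0), abs_of_pos hc0]
          _ ≤ ENNReal.ofReal c * 1 := mul_le_mul_right hφ _
          _ = ENNReal.ofReal c := mul_one _
          _ < ENNReal.ofReal C := (ENNReal.ofReal_lt_ofReal_iff hC).mpr hcC
      · rw [hq.1]; exact ENNReal.ofReal_pos.mpr he
    have := habs _ hmem
    rwa [real_inner_smul_right, abs_mul, abs_of_pos hc0] at this
  · intro u hu
    refine mul_le_one_of_forall (abs_nonneg _) he fun c hc0 hce => ?_
    have hmem : c • u ∈ W := by
      refine ⟨0, c • u, ?_, ?_, by simpa using hd⟩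
      · rw [hp.1]; exact ENNReal.ofReal_pos.mpr hC
      · calc q (c • u) = ENNReal.ofReal c * q u := by
              rw [hq.2.2 c (ne_of_gt hc0), abs_of_pos hc0]
          _ ≤ ENNReal.ofReal c * 1 := mul_le_mul_right hu _
          _ = ENNReal.ofReal c := mul_one _
          _ < ENNReal.ofReal e := (ENNReal.ofReal_lt_ofReal_iff he).mpr hce
    have := habs _ hmem
    rwa [real_inner_smul_right, abs_mul, abs_of_pos hc0] at this
  · rcases eq_or_ne ζ 0 with h0 | h0
    · rw [h0, norm_zero, mul_zero]; exact zero_le_one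
    refine mul_le_one_of_forall (norm_nonneg _) hd fun c hc0 hcd => ?_
    have hζn : 0 < ‖ζ‖ := norm_pos_iff.mpr h0
    have hmem : (c * ‖ζ‖⁻¹) • ζ ∈ W := by
      refine ⟨0, 0, ?_, ?_, ?_⟩
      · rw [hp.1]; exact ENNReal.ofReal_pos.mpr hC
      · rw [hq.1]; exact ENNReal.ofReal_pos.mpr he
      · have : ‖(c * ‖ζ‖⁻¹) • ζ - 0 - 0‖ = c := by
          rw [sub_zero, sub_zero, norm_smul, Real.norm_eq_abs,
            abs_of_pos (by positivity)]
          field_simp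
        rw [this]; exact hcd
    have := habs _ hmem
    rw [real_inner_smul_right, real_inner_self_eq_norm_sq] at this
    have heq : |c * ‖ζ‖⁻¹ * ‖ζ‖ ^ 2| = c * ‖ζ‖ := by
      rw [abs_of_nonneg (by positivity)]
      field_simp
    rw [heq] at this
    exact this

noncomputable def ub {A : Type} [Preorder A] [IsDirected A (· ≤ ·)] (a b : A) : A :=
  (directed_of (· ≤ ·) a b).choose

lemma le_ub_left {A : Type} [Preorder A] [IsDirected A (· ≤ ·)] (a b : A) : a ≤ ub a b :=
  (directed_of (· ≤ ·) a b).choose_spec.1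

lemma le_ub_right {A : Type} [Preorder A] [IsDirected A (· ≤ ·)] (a b : A) : b ≤ ub a b :=
  (directed_of (· ≤ ·) a b).choose_spec.2

/-- `(M n, γ n)` : the chain of indices. -/
noncomputable def chainMG {A : Type} [Preorder A] [IsDirected A (· ≤ ·)]
    (ω ψ : A → A) (M₀ : A) : ℕ → A × A
  | 0 => (M₀, M₀)
  | n + 1 =>
    let q := chainMG ω ψ M₀ n
    let m := ub q.1 (ω q.2)
    (m, ub q.2 (ψ m))

section Chain
variable {A : Type} [Preorder A] [IsDirected A (· ≤ ·)] (ω ψ : A → A) (M₀ : A)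

lemma chainMG_M_le (n : ℕ) : (chainMG ω ψ M₀ n).1 ≤ (chainMG ω ψ M₀ (n + 1)).1 :=
  le_ub_left _ _

lemma chainMG_omega_le (n : ℕ) : ω (chainMG ω ψ M₀ n).2 ≤ (chainMG ω ψ M₀ (n + 1)).1 :=
  le_ub_right _ _

lemma chainMG_G_le (n : ℕ) : (chainMG ω ψ M₀ n).2 ≤ (chainMG ω ψ M₀ (n + 1)).2 :=
  le_ub_left _ _

lemma chainMG_psi_le (n : ℕ) :
    ψ (chainMG ω ψ M₀ (n + 1)).1 ≤ (chainMG ω ψ M₀ (n + 1)).2 :=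
  le_ub_right _ _

lemma chainMG_G_mono : Monotone fun n => (chainMG ω ψ M₀ n).2 :=
  monotone_nat_of_le_succ (chainMG_G_le ω ψ M₀)

end Chain


/-- **Structure theorem** (Walsh/Gowers-type decomposition via Hahn–Banach). -/
theorem stmt_9 {A : Type} [Preorder A] [IsDirected A (· ≤ ·)]
    (δ : ℝ) (hδ : 0 < δ) (ω ψ : A → A) (M₀ : A) :
    ∃ M : ℕ → A, M₀ ≤ M 1 ∧ (∀ i, 1 ≤ i → i < Nat.ceil (2 / δ ^ 2) → M i ≤ M (i + 1)) ∧
      ∀ η : ℝ → ℝ, (∀ x, 0 < x → 0 < η x) →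
      ∀ (H : Type) [NormedAddCommGroup H] [InnerProductSpace ℝ H] [CompleteSpace H],
      ∀ p : A → H → ℝ≥0∞, (∀ α, IsExtSeminorm (p α)) →
        (∀ α β : A, α ≤ β → ∀ u, dualExtSeminorm (p β) u ≤ dualExtSeminorm (p α) u) →
      ∀ f : H, ‖f‖ ≤ 1 →
        ∃ i : ℕ, 1 ≤ i ∧ i ≤ Nat.ceil (2 / δ ^ 2) ∧
        ∃ (α β : A) (σ u v : H),
          ω α ≤ M i ∧ ψ (M i) ≤ β ∧
          f = σ + u + v ∧
          p β σ < ENNReal.ofReal (Cseq η (Nat.ceil (2 / δ ^ 2) - i)) ∧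
          dualExtSeminorm (p α) u < ENNReal.ofReal (η (Cseq η (Nat.ceil (2 / δ ^ 2) - i))) ∧
          ‖v‖ < δ := by
  classical
  set K := Nat.ceil (2 / δ ^ 2) with hKdef
  set M : ℕ → A := fun n => (chainMG ω ψ M₀ n).1 with hM
  set γ : ℕ → A := fun n => (chainMG ω ψ M₀ n).2 with hγ
  refine ⟨M, chainMG_M_le ω ψ M₀ 0, fun i _ _ => chainMG_M_le ω ψ M₀ i, ?_⟩
  intro η hη H _ _ _ p hp hmono f hf
  by_contra hcon
  have hKpos : 0 < K := Nat.ceil_pos.mpr (by positivity)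
  have hCpos : ∀ m, (0:ℝ) < Cseq η m := fun m => lt_of_lt_of_le one_pos (Cseq_one_le η m)
  have hηpos : ∀ m, 0 < η (Cseq η m) := fun m => hη _ (hCpos m)
  have hex : ∀ i, 1 ≤ i → i ≤ K → ∃ ζ : H, ⟪ζ, f⟫ = 1 ∧
      (∀ φ, p (γ i) φ ≤ 1 → Cseq η (K - i) * |⟪ζ, φ⟫| ≤ 1) ∧
      (∀ u, dualExtSeminorm (p (γ (i - 1))) u ≤ 1 →
        η (Cseq η (K - i)) * |⟪ζ, u⟫| ≤ 1) ∧
      δ * ‖ζ‖ ≤ 1 := by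
    intro i h1 h2
    refine sep_zeta (hp (γ i)) (isExtSeminorm_dual (p (γ (i - 1)))) (hCpos (K - i))
      (hηpos (K - i)) hδ ?_
    rintro ⟨σ, u, v, hsum, hσ, hu, hv⟩
    apply hcon
    refine ⟨i, h1, h2, γ (i - 1), γ i, σ, u, v, ?_, ?_, hsum, hσ, hu, hv⟩
    · have h := chainMG_omega_le ω ψ M₀ (i - 1)
      have hi : i - 1 + 1 = i := by omega
      rwa [hi] at h
    · have h := chainMG_psi_le ω ψ M₀ (i - 1)
      have hi : i - 1 + 1 = i := by omega
      rwa [hi] at h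
  choose! ζ hz1 hz2 hz3 hz4 using hex
  have hdual : ∀ i, 1 ≤ i → i ≤ K →
      dualExtSeminorm (p (γ i)) (ζ i) ≤ ENNReal.ofReal (1 / Cseq η (K - i)) := by
    intro i h1 h2
    refine iSup₂_le fun φ hφ => ENNReal.ofReal_le_ofReal ?_
    have h := hz2 i h1 h2 φ hφ
    rw [le_div_iff₀ (hCpos _)]
    linarith
  have hcross : ∀ i j, 1 ≤ i → i < j → j ≤ K → |⟪ζ i, ζ j⟫| ≤ 1 / 2 := by
    intro i j hi hij hjK
    have hmono' : γ i ≤ γ (j - 1) := chainMG_G_mono ω ψ M₀ (by omega : i ≤ j - 1)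
    have hd1 : dualExtSeminorm (p (γ (j - 1))) (ζ i)
        ≤ ENNReal.ofReal (1 / Cseq η (K - i)) :=
      le_trans (hmono _ _ hmono' _) (hdual i hi (by omega))
    have hsmul : dualExtSeminorm (p (γ (j - 1))) (Cseq η (K - i) • ζ i) ≤ 1 := by
      rw [(isExtSeminorm_dual _).2.2 (Cseq η (K - i)) (ne_of_gt (hCpos _)),
        abs_of_pos (hCpos _)]
      calc ENNReal.ofReal (Cseq η (K - i)) * dualExtSeminorm (p (γ (j - 1))) (ζ i)
          ≤ ENNReal.ofReal (Cseq η (K - i)) * ENNReal.ofReal (1 / Cseq η (K - i)) :=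
            mul_le_mul_right hd1 _
        _ = ENNReal.ofReal (Cseq η (K - i) * (1 / Cseq η (K - i))) :=
            (ENNReal.ofReal_mul (le_of_lt (hCpos _))).symm
        _ = 1 := by rw [mul_one_div_cancel (ne_of_gt (hCpos _)), ENNReal.ofReal_one]
    have h3 := hz3 j (by omega) hjK (Cseq η (K - i) • ζ i) hsmul
    rw [real_inner_smul_right, abs_mul, abs_of_pos (hCpos _)] at h3
    have hlb : 2 / η (Cseq η (K - j)) ≤ Cseq η (K - i) := by
      have e1 : K - (j - 1) = (K - j) + 1 := by omega
      have e2 : Cseq η (K - (j - 1))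
          = max (Cseq η (K - j)) (2 / η (Cseq η (K - j))) := by
        rw [e1, Cseq_succ]
      have h4 : 2 / η (Cseq η (K - j)) ≤ Cseq η (K - (j - 1)) := by
        rw [e2]; exact le_max_right _ _
      exact le_trans h4 (Cseq_mono η (by omega : K - (j - 1) ≤ K - i))
    have hkey : 2 ≤ η (Cseq η (K - j)) * Cseq η (K - i) := by
      rw [div_le_iff₀ (hηpos _)] at hlb; linarith
    have habs := abs_nonneg ⟪ζ j, ζ i⟫
    have hc : ⟪ζ i, ζ j⟫ = ⟪ζ j, ζ i⟫ := real_inner_comm _ _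
    rw [hc]
    nlinarith [h3, mul_nonneg (sub_nonneg.mpr hkey) habs]
  have hdiag : ∀ i, 1 ≤ i → i ≤ K → ⟪ζ i, ζ i⟫ ≤ (1 / δ) ^ 2 := by
    intro i h1 h2
    have h4 := hz4 i h1 h2
    rw [real_inner_self_eq_norm_sq]
    have hn := norm_nonneg (ζ i)
    have : ‖ζ i‖ ≤ 1 / δ := by rw [le_div_iff₀ hδ]; linarith
    nlinarith
  set I := Finset.Icc 1 K with hI
  have hcard : I.card = K := by rw [hI, Nat.card_Icc]; omega
  set S := ∑ i ∈ I, ζ i with hS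
  have hSf : ⟪S, f⟫ = (K : ℝ) := by
    rw [hS, sum_inner]
    rw [Finset.sum_congr rfl
      (fun i hi => hz1 i (Finset.mem_Icc.mp hi).1 (Finset.mem_Icc.mp hi).2)]
    rw [Finset.sum_const, hcard, nsmul_eq_mul, mul_one]
  have hKS : (K : ℝ) ≤ ‖S‖ := by
    have h1 : (K : ℝ) ≤ ‖S‖ * ‖f‖ := by rw [← hSf]; exact real_inner_le_norm S f
    nlinarith [norm_nonneg S, norm_nonneg f]
  have hSsq : ‖S‖ ^ 2 ≤ (K : ℝ) * ((K : ℝ) * (1 / 2) + ((1 / δ) ^ 2 - 1 / 2)) := by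
    rw [← real_inner_self_eq_norm_sq, hS, sum_inner]
    calc ∑ i ∈ I, ⟪ζ i, ∑ j ∈ I, ζ j⟫
        = ∑ i ∈ I, ∑ j ∈ I, ⟪ζ i, ζ j⟫ :=
          Finset.sum_congr rfl fun i _ => inner_sum _ _ _
      _ ≤ ∑ _i ∈ I, ((K : ℝ) * (1 / 2) + ((1 / δ) ^ 2 - 1 / 2)) := by
          refine Finset.sum_le_sum fun i hi => ?_
          obtain ⟨hi1, hi2⟩ := Finset.mem_Icc.mp hi
          calc ∑ j ∈ I, ⟪ζ i, ζ j⟫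
              ≤ ∑ j ∈ I, ((1 : ℝ) / 2 + if i = j then (1 / δ) ^ 2 - 1 / 2 else 0) := by
                refine Finset.sum_le_sum fun j hj => ?_
                obtain ⟨hj1, hj2⟩ := Finset.mem_Icc.mp hj
                rcases eq_or_ne i j with rfl | hne
                · rw [if_pos rfl]
                  have := hdiag i hi1 hi2
                  linarith
                · rw [if_neg hne, add_zero]
                  rcases lt_or_gt_of_ne hne with h | h
                  · have hcb := hcross i j hi1 h hj2
                    linarith [le_abs_self ⟪ζ i, ζ j⟫]
                  · have hcb := hcross j i hj1 h hi2
                    have hcc : ⟪ζ i, ζ j⟫ = ⟪ζ j, ζ i⟫ := real_inner_comm _ _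
                    rw [hcc]
                    linarith [le_abs_self ⟪ζ j, ζ i⟫]
            _ = (K : ℝ) * (1 / 2) + ((1 / δ) ^ 2 - 1 / 2) := by
                rw [Finset.sum_add_distrib, Finset.sum_const, hcard,
                  Finset.sum_ite_eq I i (fun _ => (1 / δ) ^ 2 - 1 / 2), if_pos hi,
                  nsmul_eq_mul, mul_one_div]
      _ = (K : ℝ) * ((K : ℝ) * (1 / 2) + ((1 / δ) ^ 2 - 1 / 2)) := by
          rw [Finset.sum_const, hcard, nsmul_eq_mul]
  have hceil : (2 / δ ^ 2 : ℝ) ≤ (K : ℝ) := Nat.le_ceil _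
  have hK1 : (1 : ℝ) ≤ (K : ℝ) := by exact_mod_cast hKpos
  have hKS2 : (K : ℝ) ^ 2 ≤ ‖S‖ ^ 2 := by nlinarith [norm_nonneg S]
  have hdinv : (1 / δ) ^ 2 ≤ (K : ℝ) / 2 := by
    have he : (1 / δ) ^ 2 = (2 / δ ^ 2) / 2 := by
      field_simp
    rw [he]; linarith
  nlinarith [hKS2, hSsq, mul_le_mul_of_nonneg_left hdinv (by linarith : (0:ℝ) ≤ (K:ℝ)), hK1]
end

section
/- Let Dom be a set, 𝒯 a set of partially defined maps T: dom(T)⊆Dom→Dom, G a group, and Gb = (G_i)_{i∈ℕ} a prefiltration of finite length d on G. For t∈ℕ let P_t denote the set of Gb[+t]-polynomial maps Dom→G, where Gb[+t] is the shifted prefiltration (G_{i+t})_{i∈ℕ}. Then: (1) each P_t is a group under pointwise multiplication, i.e., it contains the constant identity map and is closed under pointwise products and pointwise inverses; (2) P_0 ⊇ P_1 ⊇ ⋯ ⊇ P_{d+1}, and P_{d+1} consists only of the constant identity map; (3) for all i,j∈ℕ, if g_0∈P_i and g_1∈P_j then the pointwise commutator n ↦ g_0(n)⁻¹g_1(n)⁻¹g_0(n)g_1(n)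 belongs to P_{i+j}. In particular the Gb-polynomial maps form a group carrying the canonical prefiltration (P_t)_{t∈ℕ}. -/
def IsPolyMap {Dom G ι : Type*} [Group G] (dom : ι → Set Dom) (T : ι → Dom → Dom) :
    ℕ → (ℕ → Subgroup G) → (Dom → G) → Prop
  | 0, _, g => ∀ x, g x = 1
  | k + 1, Gs, g => (∀ x, g x ∈ Gs 0) ∧
      ∀ i : ι, ∃ D : Dom → G, IsPolyMap dom T k (fun n => Gs (n + 1)) D ∧
        ∀ x ∈ dom i, D x = (g x)⁻¹ * g (T i x)

section
variable {Dom G ι : Type*} [Group G] (dom : ι → Set Dom) (T : ι → Dom → Dom)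

lemma isPolyMap_of_one : ∀ (k : ℕ) (Gs : ℕ → Subgroup G) (g : Dom → G),
    (∀ x, g x = 1) → IsPolyMap dom T k Gs g := by
  intro k
  induction k with
  | zero => intro Gs g h; exact h
  | succ k ih =>
    intro Gs g h
    refine ⟨fun x => by rw [h x]; exact one_mem _, fun i => ⟨fun _ => 1, ih _ _ (fun _ => rfl), ?_⟩⟩
    intro x _
    rw [h x, h (T i x)]
    group

/-- Auxiliary class of "weighted polynomial expressions". -/
inductive PW (k : ℕ) (Gs : ℕ → Subgroup G) : ℕ → (Dom → G) → Prop
  | base (t : ℕ) (g : Dom → G)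
      (h : IsPolyMap dom T (k - t) (fun n => Gs (n + t)) g) : PW k Gs t g
  | mono (t : ℕ) (g : Dom → G) (h : PW k Gs (t + 1) g) : PW k Gs t g
  | mul (t : ℕ) (g h : Dom → G) (hg : PW k Gs t g) (hh : PW k Gs t h) :
      PW k Gs t (fun x => g x * h x)
  | inv (t : ℕ) (g : Dom → G) (hg : PW k Gs t g) : PW k Gs t (fun x => (g x)⁻¹)
  | comm (i j : ℕ) (g h : Dom → G) (hg : PW k Gs i g) (hh : PW k Gs j h) :
      PW k Gs (i + j) (fun x => (g x)⁻¹ * (h x)⁻¹ * g x * h x)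

variable {dom T}
variable {k : ℕ} {Gs : ℕ → Subgroup G}

lemma PW.congr {t : ℕ} {g h : Dom → G} (hg : PW dom T k Gs t g) (he : ∀ x, g x = h x) :
    PW dom T k Gs t h := (funext he : g = h) ▸ hg

lemma PW.of_add {t c : ℕ} {g : Dom → G} : PW dom T k Gs (t + c) g → PW dom T k Gs t g := by
  induction c with
  | zero => exact id
  | succ n ih => exact fun h => ih (PW.mono _ _ h)

lemma PW.of_le {t s : ℕ} {g : Dom → G} (hts : t ≤ s) (hg : PW dom T k Gs s g) :
    PW dom T k Gs t g := by
  obtain ⟨c, rfl⟩ := Nat.exists_eq_add_of_le hts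
  exact PW.of_add hg

lemma PW.conj {p q : ℕ} {g u : Dom → G} (hg : PW dom T k Gs p g) (hu : PW dom T k Gs q u) :
    PW dom T k Gs p (fun x => (u x)⁻¹ * g x * u x) := by
  refine (PW.mul _ _ _ hg ((PW.comm _ _ _ _ hg hu).of_le (Nat.le_add_right p q))).congr ?_
  intro x; group

lemma PW.values (hanti : ∀ i j : ℕ, i ≤ j → Gs j ≤ Gs i)
    (hcomm : ∀ i j : ℕ, ∀ a ∈ Gs i, ∀ b ∈ Gs j, a⁻¹ * b⁻¹ * a * b ∈ Gs (i + j))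
    {t : ℕ} {g : Dom → G} (hg : PW dom T k Gs t g) : ∀ x, g x ∈ Gs t := by
  induction hg with
  | base t g h =>
    intro x
    cases hkt : k - t with
    | zero =>
      rw [hkt] at h
      simp only [IsPolyMap] at h
      rw [h x]; exact one_mem _
    | succ f =>
      rw [hkt] at h
      simp only [IsPolyMap] at h
      have := h.1 x
      simpa using this
  | mono t g h ih => exact fun x => hanti t (t + 1) (Nat.le_succ t) (ih x)
  | mul t g h hg hh ihg ihh => exact fun x => mul_mem (ihg x) (ihh x)
  | inv t g hg ih => exact fun x => inv_mem (ih x)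
  | comm i j g h hg hh ihg ihh => exact fun x => hcomm i j _ (ihg x) _ (ihh x)

lemma PW.deriv {t : ℕ} {g : Dom → G} (hg : PW dom T k Gs t g) (l : ι) :
    ∃ D : Dom → G, PW dom T k Gs (t + 1) D ∧ ∀ x ∈ dom l, D x = (g x)⁻¹ * g (T l x) := by
  induction hg with
  | base t g h =>
    cases hkt : k - t with
    | zero =>
      rw [hkt] at h
      simp only [IsPolyMap] at h
      refine ⟨fun _ => 1, PW.base _ _ (isPolyMap_of_one _ _ _ _ _ (fun _ => rfl)), ?_⟩
      intro x _
      rw [h x, h (T l x)]; group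
    | succ f =>
      rw [hkt] at h
      simp only [IsPolyMap] at h
      obtain ⟨D, hD, hDd⟩ := h.2 l
      refine ⟨D, PW.base _ _ ?_, hDd⟩
      have hf : k - (t + 1) = f := by omega
      rw [hf]
      have he : (fun n => Gs (n + (t + 1))) = fun n => Gs (n + 1 + t) := by
        funext n; congr 1; omega
      rw [he]
      exact hD
  | mono t g h ih =>
    obtain ⟨D, hD, hDd⟩ := ih
    exact ⟨D, PW.mono _ _ hD, hDd⟩
  | mul t g h hg hh ihg ihh =>
    obtain ⟨a, ha, had⟩ := ihg
    obtain ⟨b, hb, hbd⟩ := ihh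
    refine ⟨fun x => ((h x)⁻¹ * a x * h x) * b x, PW.mul _ _ _ (ha.conj hh) hb, ?_⟩
    intro x hx
    simp only
    rw [had x hx, hbd x hx]
    group
  | inv t g hg ih =>
    obtain ⟨a, ha, had⟩ := ih
    refine ⟨fun x => ((g x)⁻¹)⁻¹ * (a x)⁻¹ * (g x)⁻¹,
      PW.conj (PW.inv _ _ ha) (PW.inv _ _ hg), ?_⟩
    intro x hx
    simp only
    rw [had x hx]
    group
  | comm i j g h hg hh ihg ihh =>
    obtain ⟨a, ha, had⟩ := ihg
    obtain ⟨b, hb, hbd⟩ := ihh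
    have hc : PW dom T k Gs (i + j) (fun x => (g x)⁻¹ * (h x)⁻¹ * g x * h x) :=
      PW.comm _ _ _ _ hg hh
    have t1 : PW dom T k Gs (i + j + 1)
        (fun x => (a x)⁻¹ * ((g x)⁻¹ * (b x)⁻¹ * g x * b x) * a x) :=
      PW.conj ((PW.comm _ _ _ _ hg hb).of_le (by omega)) ha
    have t1' : PW dom T k Gs (i + j + 1)
        (fun x => ((g x)⁻¹ * (h x)⁻¹ * g x * h x)⁻¹ *
          ((a x)⁻¹ * ((g x)⁻¹ * (b x)⁻¹ * g x * b x) * a x) *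
          ((g x)⁻¹ * (h x)⁻¹ * g x * h x)) :=
      PW.conj t1 hc
    have hba : PW dom T k Gs 1 (fun x => b x * a x) :=
      PW.mul _ _ _ (hb.of_le (by omega)) (ha.of_le (by omega))
    have t2 : PW dom T k Gs (i + j + 1)
        (fun x => ((g x)⁻¹ * (h x)⁻¹ * g x * h x)⁻¹ * (b x * a x)⁻¹ *
          ((g x)⁻¹ * (h x)⁻¹ * g x * h x) * (b x * a x)) :=
      PW.comm _ _ _ _ hc hba
    have t3 : PW dom T k Gs (i + j + 1)
        (fun x => (a x)⁻¹ * (b x)⁻¹ * a x * b x) :=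
      (PW.comm _ _ _ _ ha hb).of_le (by omega)
    have t4 : PW dom T k Gs (i + j + 1)
        (fun x => (b x)⁻¹ * ((a x)⁻¹ * (h x)⁻¹ * a x * h x) * b x) :=
      (PW.conj (PW.comm _ _ _ _ ha hh) hb).of_le (by omega)
    refine ⟨_, PW.mul _ _ _ (PW.mul _ _ _ (PW.mul _ _ _ t1' t2) t3) t4, ?_⟩
    intro x hx
    simp only
    rw [had x hx, hbd x hx]
    group

lemma PW.toPoly (hanti : ∀ i j : ℕ, i ≤ j → Gs j ≤ Gs i)
    (hcomm : ∀ i j : ℕ, ∀ a ∈ Gs i, ∀ b ∈ Gs j, a⁻¹ * b⁻¹ * a * b ∈ Gs (i + j))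
    (hbot : Gs k = ⊥) :
    ∀ (f t : ℕ) (g : Dom → G), k - t = f → PW dom T k Gs t g →
      IsPolyMap dom T f (fun n => Gs (n + t)) g := by
  intro f
  induction f with
  | zero =>
    intro t g hft hg
    intro x
    have hv := hg.values hanti hcomm x
    have h2 := hanti k t (by omega) hv
    rw [hbot] at h2
    simpa using h2
  | succ f ih =>
    intro t g hft hg
    refine ⟨fun x => by simpa using hg.values hanti hcomm x, fun l => ?_⟩
    obtain ⟨D, hD, hDd⟩ := hg.deriv l
    refine ⟨D, ?_, hDd⟩
    have hf : k - (t + 1) = f := by omega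
    have hIP := ih (t + 1) D hf hD
    have he : (fun n => Gs (n + (t + 1))) = (fun n => (fun m => Gs (m + t)) (n + 1)) := by
      funext n
      show Gs (n + (t + 1)) = Gs (n + 1 + t)
      congr 1
      omega
    exact he ▸ hIP

end

/-- **Polynomial maps into a nilpotent group form a group** (Theorem `thm:poly-group` /
Corollary `cor:poly-group`): writing `P t` for the set of `Gb[+t]`-polynomial maps,
each `P t` is a group under pointwise operations, `P 0 ⊇ P 1 ⊇ ⋯ ⊇ P (d+1)`, the set
`P (d+1)` consists only of the constant identity, and commutators map `P i × P j` to
`P (i+j)`. -/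
theorem stmt_12 {Dom G ι : Type*} [Group G] (dom : ι → Set Dom) (T : ι → Dom → Dom)
    (Gs : ℕ → Subgroup G) (d : ℕ)
    (hanti : ∀ i j : ℕ, i ≤ j → Gs j ≤ Gs i)
    (hcomm : ∀ i j : ℕ, ∀ a ∈ Gs i, ∀ b ∈ Gs j, a⁻¹ * b⁻¹ * a * b ∈ Gs (i + j))
    (hlen : Gs (d + 1) = ⊥) :
    (∀ t : ℕ,
      IsPolyMap dom T (d + 1 - t) (fun n => Gs (n + t)) (fun _ => 1) ∧
      (∀ g₀ g₁ : Dom → G,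
        IsPolyMap dom T (d + 1 - t) (fun n => Gs (n + t)) g₀ →
        IsPolyMap dom T (d + 1 - t) (fun n => Gs (n + t)) g₁ →
        IsPolyMap dom T (d + 1 - t) (fun n => Gs (n + t)) (fun x => g₀ x * g₁ x)) ∧
      (∀ g : Dom → G,
        IsPolyMap dom T (d + 1 - t) (fun n => Gs (n + t)) g →
        IsPolyMap dom T (d + 1 - t) (fun n => Gs (n + t)) (fun x => (g x)⁻¹))) ∧
    (∀ t : ℕ, ∀ g : Dom → G,
      IsPolyMap dom T (d + 1 - (t + 1)) (fun n => Gs (n + (t + 1))) g →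
      IsPolyMap dom T (d + 1 - t) (fun n => Gs (n + t)) g) ∧
    (∀ g : Dom → G,
      IsPolyMap dom T (d + 1 - (d + 1)) (fun n => Gs (n + (d + 1))) g ↔ ∀ x, g x = 1) ∧
    (∀ i j : ℕ, ∀ g₀ g₁ : Dom → G,
      IsPolyMap dom T (d + 1 - i) (fun n => Gs (n + i)) g₀ →
      IsPolyMap dom T (d + 1 - j) (fun n => Gs (n + j)) g₁ →
      IsPolyMap dom T (d + 1 - (i + j)) (fun n => Gs (n + (i + j)))
        (fun x => (g₀ x)⁻¹ * (g₁ x)⁻¹ * g₀ x * g₁ x)) := by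
  refine ⟨fun t => ⟨?_, ?_, ?_⟩, ?_, ?_, ?_⟩
  · exact isPolyMap_of_one _ _ _ _ _ (fun _ => rfl)
  · intro g₀ g₁ h₀ h₁
    exact PW.toPoly hanti hcomm hlen _ t _ rfl
      (PW.mul _ _ _ (PW.base _ _ h₀) (PW.base _ _ h₁))
  · intro g hg
    exact PW.toPoly hanti hcomm hlen _ t _ rfl (PW.inv _ _ (PW.base _ _ hg))
  · intro t g hg
    exact PW.toPoly hanti hcomm hlen _ t _ rfl (PW.mono _ _ (PW.base _ _ hg))
  · intro g
    constructor
    · intro h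
      rw [Nat.sub_self] at h
      exact h
    · intro h
      exact isPolyMap_of_one _ _ _ _ _ h
  · intro i j g₀ g₁ h₀ h₁
    exact PW.toPoly hanti hcomm hlen _ (i + j) _ rfl
      (PW.comm _ _ _ _ (PW.base _ _ h₀) (PW.base _ _ h₁))
end

section
/- Let G be a nilpotent group generated by a finite set F, and let H ≤ G be a subgroup such that for every f∈F there exists an integer r ≥ 1 with f^r∈H. Then H has finite index in G. -/
open Subgroup Pointwise
open scoped commutatorElement

namespace Stmt13

universe u

variable {G : Type*} [Group G]

private lemma lcs_succ' (n : ℕ) :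
    (⊤ : Subgroup G).lowerCentralSeries (n + 1) = ⁅(⊤ : Subgroup G).lowerCentralSeries n, (⊤ : Subgroup G)⁆ := rfl

private lemma conj_eq_self {c v : G} (h : Commute c v) : v * c * v⁻¹ = c := by
  rw [← h.eq]; group

private lemma comm_mul_right (a b c : G) : ⁅a, b * c⁆ = ⁅a, b⁆ * (b * ⁅a, c⁆ * b⁻¹) := by
  simp only [commutatorElement_def]; group

private lemma comm_mul_left (a b c : G) : ⁅a * b, c⁆ = (a * ⁅b, c⁆ * a⁻¹) * ⁅a, c⁆ := by
  simp only [commutatorElement_def]; group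

private lemma comm_inv_left (a b : G) : ⁅a⁻¹, b⁆ = a⁻¹ * ⁅a, b⁆⁻¹ * a := by
  simp only [commutatorElement_def]; group

private lemma comm_inv_right (a b : G) : ⁅a, b⁻¹⁆ = b⁻¹ * ⁅a, b⁆⁻¹ * b := by
  simp only [commutatorElement_def]; group

private lemma conj_formula (d g : G) : g * d * g⁻¹ = d * ⁅d⁻¹, g⁆ := by
  simp only [commutatorElement_def]; group

private lemma comm_pow_right (u v : G) (hc : ∀ w y : G, Commute ⁅u, w⁆ y) (r : ℕ) :
    ⁅u, v ^ r⁆ = ⁅u, v⁆ ^ r := by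
  induction r with
  | zero => simp
  | succ r ih =>
    rw [pow_succ' v, comm_mul_right, conj_eq_self (hc (v ^ r) v), ih, ← pow_succ']

private lemma comm_pow_left (u v : G) (hc : ∀ (k : ℕ) (y : G), Commute ⁅u ^ k, v⁆ y) (m : ℕ) :
    ⁅u ^ m, v⁆ = ⁅u, v⁆ ^ m := by
  induction m with
  | zero => simp
  | succ m ih =>
    rw [pow_succ' u, comm_mul_left, conj_eq_self (hc m u), ih, ← pow_succ]

private lemma comm_central_mul_left {z : G} (hz : ∀ y : G, Commute z y) (a b : G) :
    ⁅z * a, b⁆ = ⁅a, b⁆ := by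
  have h1 : ⁅z * a, b⁆ = z * (a * b * a⁻¹) * z⁻¹ * b⁻¹ := by
    simp only [commutatorElement_def]; group
  rw [h1, conj_eq_self (hz (a * b * a⁻¹)).symm, commutatorElement_def]

/-- Iterated left-normed commutators of the generating set. -/
private def commSet (F : Set G) : ℕ → Set G
  | 0 => F
  | n + 1 => {z | ∃ x ∈ commSet F n, ∃ f ∈ F, z = ⁅x, f⁆}

private lemma commSet_subset (F : Set G) (n : ℕ) :
    commSet F n ⊆ ((⊤ : Subgroup G).lowerCentralSeries n : Set G) := by
  induction n with
  | zero => intro x _; exact mem_top x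
  | succ n ih =>
    rintro z ⟨x, hx, f, hf, rfl⟩
    rw [SetLike.mem_coe, lcs_succ']
    exact commutator_mem_commutator (ih hx) (mem_top f)

private lemma lcs_eq_closure (F : Set G) (hgen : closure F = ⊤) (n : ℕ) :
    (⊤ : Subgroup G).lowerCentralSeries n = closure (commSet F n) ⊔ (⊤ : Subgroup G).lowerCentralSeries (n + 1) := by
  induction n with
  | zero =>
    rw [Subgroup.lowerCentralSeries_zero, show commSet F 0 = F from rfl, hgen, top_sup_eq]
  | succ k ih =>
    refine le_antisymm ?_ (sup_le ((closure_le _).mpr (commSet_subset F (k + 1)))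
      (Subgroup.lowerCentralSeries_antitone _ (Nat.le_succ _)))
    set D := closure (commSet F (k + 1)) ⊔ (⊤ : Subgroup G).lowerCentralSeries (k + 2) with hD
    have hDmem1 : ∀ z ∈ commSet F (k + 1), z ∈ D := fun z hz =>
      (le_sup_left : closure (commSet F (k + 1)) ≤ D) (subset_closure hz)
    have hDmem2 : ∀ z ∈ (⊤ : Subgroup G).lowerCentralSeries (k + 2), z ∈ D := fun z hz =>
      (le_sup_right : (⊤ : Subgroup G).lowerCentralSeries (k + 2) ≤ D) hz
    have hDle : D ≤ (⊤ : Subgroup G).lowerCentralSeries (k + 1) :=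
      sup_le ((closure_le _).mpr (commSet_subset F (k + 1)))
        (Subgroup.lowerCentralSeries_antitone _ (Nat.le_succ _))
    have hnext : ∀ x ∈ (⊤ : Subgroup G).lowerCentralSeries (k + 1), ∀ g : G, ⁅x, g⁆ ∈ D := by
      intro x hx g
      refine hDmem2 _ ?_
      rw [lcs_succ']
      exact commutator_mem_commutator hx (mem_top g)
    have hDnormal : D.Normal := by
      constructor
      intro d hd g
      rw [conj_formula]
      exact D.mul_mem hd (hDmem2 _ (by
        rw [lcs_succ']
        exact commutator_mem_commutator (((⊤ : Subgroup G).lowerCentralSeries (k + 1)).inv_mem (hDle hd))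
          (mem_top g)))
    have key : ∀ x ∈ (⊤ : Subgroup G).lowerCentralSeries k, ∀ g : G, ⁅x, g⁆ ∈ D := by
      intro x hx
      have hx' : x ∈ closure (commSet F k ∪ ((⊤ : Subgroup G).lowerCentralSeries (k + 1) : Set G)) := by
        rw [Subgroup.closure_union, closure_eq]; rw [ih] at hx; exact hx
      clear hx
      induction hx' using closure_induction with
      | mem x hxU =>
        rcases hxU with hc | hl
        · intro g
          have hg : g ∈ closure F := by rw [hgen]; exact mem_top g
          induction hg using closure_induction with
          | mem f hf => exact hDmem1 _ ⟨x, hc, f, hf, rfl⟩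
          | one => simpa using D.one_mem
          | mul a b ha hb pa pb =>
            rw [comm_mul_right]
            exact D.mul_mem pa (hDnormal.conj_mem _ pb a)
          | inv a ha pa =>
            rw [comm_inv_right]
            have hconj := hDnormal.conj_mem _ (D.inv_mem pa) a⁻¹
            rwa [inv_inv] at hconj
        · intro g; exact hnext x hl g
      | one => intro g; simpa using D.one_mem
      | mul x y hx hy px py =>
        intro g
        rw [comm_mul_left]
        exact D.mul_mem (hDnormal.conj_mem _ (py g) x) (px g)
      | inv x hx px =>
        intro g
        rw [comm_inv_left]
        have hconj := hDnormal.conj_mem _ (D.inv_mem (px g)) x⁻¹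
        rwa [inv_inv] at hconj
    rw [lcs_succ']
    exact commutator_le.mpr fun x hx g _ => key x hx g

private lemma commSet_pow (F : Set G) (H : Subgroup G)
    (hroot : ∀ f ∈ F, ∃ r : ℕ, 1 ≤ r ∧ f ^ r ∈ H) (n : ℕ) :
    ∀ κ ∈ commSet F n, ∃ m : ℕ, 1 ≤ m ∧ ∃ h ∈ H, κ ^ m * h⁻¹ ∈ (⊤ : Subgroup G).lowerCentralSeries (n + 1) := by
  induction n with
  | zero =>
    intro κ hκ
    obtain ⟨r, hr, hrH⟩ := hroot κ hκ
    exact ⟨r, hr, κ ^ r, hrH, by rw [mul_inv_cancel]; exact Subgroup.one_mem _⟩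
  | succ k ih =>
    rintro κ ⟨x, hx, f, hf, rfl⟩
    obtain ⟨m, hm, h, hH, hxm⟩ := ih x hx
    obtain ⟨r, hr, hrH⟩ := hroot f hf
    set N := (⊤ : Subgroup G).lowerCentralSeries (k + 2) with hN
    let π : G →* G ⧸ N := QuotientGroup.mk' N
    have hπ : Function.Surjective π := QuotientGroup.mk'_surjective N
    have hker : ∀ a : G, π a = 1 ↔ a ∈ N := fun a => QuotientGroup.eq_one_iff a
    have hcentral : ∀ w ∈ (⊤ : Subgroup G).lowerCentralSeries (k + 1), ∀ y, Commute (π w) y := by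
      intro w hw y
      obtain ⟨g, rfl⟩ := hπ y
      refine commutatorElement_eq_one_iff_commute.mp ?_
      rw [← map_commutatorElement]
      refine (hker _).mpr ?_
      rw [hN, lcs_succ']
      exact commutator_mem_commutator hw (mem_top g)
    have hxLCS : x ∈ (⊤ : Subgroup G).lowerCentralSeries k := commSet_subset F k hx
    have hu : ∀ (j : ℕ) (w y : G ⧸ N), Commute (⁅(π x) ^ j, w⁆) y := by
      intro j w y
      obtain ⟨g, rfl⟩ := hπ w
      rw [← map_pow, ← map_commutatorElement]
      refine hcentral _ ?_ _
      rw [lcs_succ']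
      exact commutator_mem_commutator (((⊤ : Subgroup G).lowerCentralSeries k).pow_mem hxLCS j) (mem_top g)
    have key : π (⁅x, f⁆ ^ (r * m) * ⁅h, f ^ r⁆⁻¹) = 1 := by
      rw [map_mul, map_inv]
      have hcomm1 : ∀ w y : G ⧸ N, Commute ⁅π x, w⁆ y := fun w y => by
        simpa using hu 1 w y
      calc π (⁅x, f⁆ ^ (r * m)) * (π ⁅h, f ^ r⁆)⁻¹
          = ⁅π x, π f⁆ ^ (r * m) * (π ⁅h, f ^ r⁆)⁻¹ := by rw [map_pow, map_commutatorElement]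
        _ = (⁅π x, π f⁆ ^ r) ^ m * (π ⁅h, f ^ r⁆)⁻¹ := by rw [pow_mul]
        _ = ⁅π x, (π f) ^ r⁆ ^ m * (π ⁅h, f ^ r⁆)⁻¹ := by
            rw [comm_pow_right (π x) (π f) hcomm1 r]
        _ = ⁅(π x) ^ m, (π f) ^ r⁆ * (π ⁅h, f ^ r⁆)⁻¹ := by
            rw [comm_pow_left (π x) ((π f) ^ r) (fun j y => hu j _ y) m]
        _ = ⁅π (x ^ m), π (f ^ r)⁆ * (π ⁅h, f ^ r⁆)⁻¹ := by rw [map_pow, map_pow]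
        _ = ⁅π (x ^ m * h⁻¹) * π h, π (f ^ r)⁆ * (π ⁅h, f ^ r⁆)⁻¹ := by
            rw [show π (x ^ m * h⁻¹) * π h = π (x ^ m) from by
              rw [← map_mul, inv_mul_cancel_right]]
        _ = ⁅π h, π (f ^ r)⁆ * (π ⁅h, f ^ r⁆)⁻¹ := by
            rw [comm_central_mul_left (hcentral _ hxm) (π h) (π (f ^ r))]
        _ = 1 := by rw [← map_commutatorElement, mul_inv_cancel]
    refine ⟨r * m, ?_, ⁅h, f ^ r⁆, ?_, ?_⟩
    · exact Nat.one_le_iff_ne_zero.mpr (Nat.mul_ne_zero (by omega) (by omega))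
    · rw [commutatorElement_def]
      exact H.mul_mem (H.mul_mem (H.mul_mem hH hrH) (H.inv_mem hH)) (H.inv_mem hrH)
    · exact (hker _).mp key

private lemma pow_mem_of_mem_last (F : Set G) (hgen : closure F = ⊤) (H : Subgroup G)
    (hroot : ∀ f ∈ F, ∃ r : ℕ, 1 ≤ r ∧ f ^ r ∈ H) (n : ℕ)
    (hbot : (⊤ : Subgroup G).lowerCentralSeries (n + 1) = ⊥) :
    ∀ z ∈ (⊤ : Subgroup G).lowerCentralSeries n, ∃ m : ℕ, 1 ≤ m ∧ z ^ m ∈ H := by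
  have hcls : closure (commSet F n) ≤ (⊤ : Subgroup G).lowerCentralSeries n :=
    (closure_le _).mpr (commSet_subset F n)
  have hcent : ∀ w ∈ (⊤ : Subgroup G).lowerCentralSeries n, ∀ y : G, Commute w y := by
    intro w hw y
    refine commutatorElement_eq_one_iff_commute.mp ?_
    have hmem : ⁅w, y⁆ ∈ (⊤ : Subgroup G).lowerCentralSeries (n + 1) := by
      rw [lcs_succ']; exact commutator_mem_commutator hw (mem_top y)
    rwa [hbot, mem_bot] at hmem
  intro z hz
  have hz' : z ∈ closure (commSet F n) := by
    rw [lcs_eq_closure F hgen n, hbot, sup_bot_eq] at hz; exact hz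
  clear hz
  induction hz' using closure_induction with
  | mem κ hκ =>
    obtain ⟨m, hm, h, hH, hmem⟩ := commSet_pow F H hroot n κ hκ
    rw [hbot, mem_bot, mul_inv_eq_one] at hmem
    exact ⟨m, hm, hmem ▸ hH⟩
  | one => exact ⟨1, le_refl 1, by simpa using H.one_mem⟩
  | mul a b ha hb pa pb =>
    obtain ⟨m₁, hm₁, hA⟩ := pa
    obtain ⟨m₂, hm₂, hB⟩ := pb
    have hab : Commute a b := hcent a (hcls ha) b
    refine ⟨m₁ * m₂, Nat.one_le_iff_ne_zero.mpr (Nat.mul_ne_zero (by omega) (by omega)), ?_⟩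
    rw [hab.mul_pow]
    refine H.mul_mem ?_ ?_
    · rw [pow_mul]; exact H.pow_mem hA m₂
    · rw [mul_comm m₁ m₂, pow_mul]; exact H.pow_mem hB m₁
  | inv a ha pa =>
    obtain ⟨m, hm, hA⟩ := pa
    exact ⟨m, hm, by rw [inv_pow]; exact H.inv_mem hA⟩

private lemma lcs_le_map {Q : Type*} [Group Q] (f : G →* Q) (hf : Function.Surjective f) (n : ℕ) :
    (⊤ : Subgroup Q).lowerCentralSeries n ≤ ((⊤ : Subgroup G).lowerCentralSeries n).map f := by
  induction n with
  | zero =>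
    intro q _
    obtain ⟨g, rfl⟩ := hf q
    exact ⟨g, mem_top g, rfl⟩
  | succ k ih =>
    rw [lcs_succ', lcs_succ']
    have htop : (⊤ : Subgroup Q) ≤ (⊤ : Subgroup G).map f := fun q _ => by
      obtain ⟨g, rfl⟩ := hf q; exact ⟨g, mem_top g, rfl⟩
    calc ⁅(⊤ : Subgroup Q).lowerCentralSeries k, (⊤ : Subgroup Q)⁆
        ≤ ⁅((⊤ : Subgroup G).lowerCentralSeries k).map f, (⊤ : Subgroup G).map f⁆ := commutator_mono ih htop
      _ = ⁅(⊤ : Subgroup G).lowerCentralSeries k, (⊤ : Subgroup G)⁆.map f := (map_commutator _ _ f).symm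

private theorem aux (n : ℕ) : ∀ {G : Type u} [Group G] (F : Set G), F.Finite →
    closure F = ⊤ → ∀ H : Subgroup G, (∀ f ∈ F, ∃ r : ℕ, 1 ≤ r ∧ f ^ r ∈ H) →
    (⊤ : Subgroup G).lowerCentralSeries n = ⊥ → H.FiniteIndex := by
  induction n with
  | zero =>
    intro G _ F _ _ H _ hbot
    have hH : H = ⊤ := by
      refine eq_top_iff.mpr fun g _ => ?_
      have hb : g ∈ (⊥ : Subgroup G) := hbot ▸ (mem_top g : g ∈ (⊤ : Subgroup G).lowerCentralSeries 0)
      rw [mem_bot] at hb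
      rw [hb]; exact H.one_mem
    exact ⟨by rw [hH, index_top]; exact one_ne_zero⟩
  | succ n ih =>
    intro G _ F hFfin hgen H hroot hbot
    set Γ := (⊤ : Subgroup G).lowerCentralSeries n with hΓ
    let π : G →* G ⧸ Γ := QuotientGroup.mk' Γ
    have hπ : Function.Surjective π := QuotientGroup.mk'_surjective Γ
    have hQbot : (⊤ : Subgroup (G ⧸ Γ)).lowerCentralSeries n = ⊥ := by
      rw [eq_bot_iff]
      refine le_trans (lcs_le_map π hπ n) ?_
      rintro q ⟨g, hg, rfl⟩
      rw [mem_bot]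
      exact (QuotientGroup.eq_one_iff g).mpr hg
    have hgenq : closure (π '' F) = ⊤ := by
      rw [← MonoidHom.map_closure, hgen]
      exact map_top_of_surjective π hπ
    have hrootq : ∀ q ∈ π '' F, ∃ r : ℕ, 1 ≤ r ∧ q ^ r ∈ H.map π := by
      rintro q ⟨f, hf, rfl⟩
      obtain ⟨r, hr, hrH⟩ := hroot f hf
      exact ⟨r, hr, ⟨f ^ r, hrH, (map_pow π f r).symm⟩⟩
    have hQfin : (H.map π).FiniteIndex :=
      ih (π '' F) (hFfin.image π) hgenq (H.map π) hrootq hQbot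
    set K := (H.map π).comap π with hK
    have hKindex : K.index ≠ 0 := by
      rw [hK, index_comap_of_surjective (H.map π) hπ]
      exact hQfin.index_ne_zero
    have hHK : H ≤ K := fun g hg => mem_comap.mpr (mem_map_of_mem π hg)
    have hKeq : K = H ⊔ Γ := by rw [hK, comap_map_eq, QuotientGroup.ker_mk']
    have hΓcent : ∀ z ∈ Γ, ∀ y : G, Commute z y := by
      intro z hz y
      refine commutatorElement_eq_one_iff_commute.mp ?_
      have hmem : ⁅z, y⁆ ∈ (⊤ : Subgroup G).lowerCentralSeries (n + 1) := by
        rw [lcs_succ']; exact commutator_mem_commutator hz (mem_top y)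
      rwa [hbot, mem_bot] at hmem
    have hΓK : Γ ≤ K := hKeq ▸ le_sup_right
    have hdec : ∀ k ∈ K, ∃ h ∈ H, ∃ z ∈ Γ, k = h * z := by
      intro k hk
      rw [hKeq] at hk
      have hk' : k ∈ ((H : Set G) * (Γ : Set G)) := by rw [← mul_normal]; exact hk
      obtain ⟨h, hh, z, hz, hzk⟩ := hk'
      exact ⟨h, hh, z, hz, hzk.symm⟩
    have hLnormal : (H.subgroupOf K).Normal := by
      constructor
      intro a ha g
      rw [mem_subgroupOf] at ha ⊢
      obtain ⟨h, hh, z, hz, hg⟩ := hdec (g : G) g.2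
      have hza : z * (a : G) * z⁻¹ = (a : G) := conj_eq_self (hΓcent z hz (a : G)).symm
      have hcoe : ((g * a * g⁻¹ : K) : G) = h * (a : G) * h⁻¹ := by
        have h1 : ((g * a * g⁻¹ : K) : G) = (g : G) * (a : G) * (g : G)⁻¹ := rfl
        rw [h1, hg]
        calc h * z * (a : G) * (h * z)⁻¹ = h * (z * (a : G) * z⁻¹) * h⁻¹ := by group
          _ = h * (a : G) * h⁻¹ := by rw [hza]
      rw [hcoe]
      exact H.mul_mem (H.mul_mem hh ha) (H.inv_mem hh)
    haveI := hLnormal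
    set L := H.subgroupOf K with hL
    let ρ : K →* K ⧸ L := QuotientGroup.mk' L
    have hρ : Function.Surjective ρ := QuotientGroup.mk'_surjective L
    have hrep : ∀ q : K ⧸ L, ∃ z : G, ∃ hz : z ∈ Γ, q = ρ ⟨z, hΓK hz⟩ := by
      intro q
      obtain ⟨k, rfl⟩ := hρ q
      obtain ⟨h, hh, z, hz, hk⟩ := hdec (k : G) k.2
      refine ⟨z, hz, ?_⟩
      have hcoe : ((⟨z, hΓK hz⟩⁻¹ * k : K) : G) = h := by
        have h2 : Commute h (z⁻¹) := ((hΓcent z hz h).inv_left).symm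
        have h3 := conj_eq_self h2
        rw [inv_inv] at h3
        calc ((⟨z, hΓK hz⟩⁻¹ * k : K) : G) = z⁻¹ * (k : G) := rfl
          _ = z⁻¹ * (h * z) := by rw [hk]
          _ = z⁻¹ * h * z := by group
          _ = h := h3
      symm
      rw [QuotientGroup.mk'_eq_mk']
      refine ⟨⟨z, hΓK hz⟩⁻¹ * k, ?_, by group⟩
      rw [hL, mem_subgroupOf, hcoe]
      exact hh
    have hcomm : ∀ q₁ q₂ : K ⧸ L, q₁ * q₂ = q₂ * q₁ := by
      intro q₁ q₂
      obtain ⟨z₁, hz₁, rfl⟩ := hrep q₁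
      obtain ⟨z₂, hz₂, rfl⟩ := hrep q₂
      rw [← map_mul, ← map_mul]
      congr 1
      exact Subtype.ext ((hΓcent z₁ hz₁ z₂).eq)
    haveI : Group.FG G := Group.fg_iff.mpr ⟨F, hgen, hFfin⟩
    haveI : K.FiniteIndex := ⟨hKindex⟩
    haveI hFGK : Group.FG K := inferInstance
    haveI hFGQ : Group.FG (K ⧸ L) := inferInstance
    letI : CommGroup (K ⧸ L) := { (inferInstance : Group (K ⧸ L)) with mul_comm := hcomm }
    have htor : Monoid.IsTorsion (K ⧸ L) := by
      intro q
      obtain ⟨z, hz, rfl⟩ := hrep q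
      obtain ⟨m, hm, hmH⟩ := pow_mem_of_mem_last F hgen H hroot n hbot z hz
      refine isOfFinOrder_iff_pow_eq_one.mpr ⟨m, by omega, ?_⟩
      rw [← map_pow]
      refine (QuotientGroup.eq_one_iff _).mpr ?_
      rw [hL, mem_subgroupOf]
      show ((⟨z, hΓK hz⟩ ^ m : K) : G) ∈ H
      rw [SubgroupClass.coe_pow]
      exact hmH
    have hfin : Finite (K ⧸ L) := CommGroup.finite_of_fg_torsion _ htor
    have hLindex : (H.subgroupOf K).index ≠ 0 := by
      have hEq : (H.subgroupOf K).index = Nat.card (K ⧸ L) := rfl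
      rw [hEq]
      exact Nat.card_ne_zero.mpr ⟨⟨1⟩, hfin⟩
    refine ⟨?_⟩
    rw [← relIndex_mul_index hHK]
    exact Nat.mul_ne_zero hLindex hKindex

end Stmt13

/-- In a nilpotent group generated by a finite set `F`, a subgroup containing a positive
power of each generator has finite index. -/
theorem stmt_13 {G : Type*} [Group G] [Group.IsNilpotent G]
    (F : Set G) (hFfin : F.Finite) (hgen : Subgroup.closure F = ⊤)
    (H : Subgroup G) (hroot : ∀ f ∈ F, ∃ r : ℕ, 1 ≤ r ∧ f ^ r ∈ H) :
    H.FiniteIndex := by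
  obtain ⟨n, hn⟩ := Subgroup.nilpotent_iff_lowerCentralSeries.mp ‹Group.IsNilpotent G›
  exact Stmt13.aux n F hFfin hgen H hroot hn
end

section
/- Let G be a nilpotent group and H ≤ G a finitely generated subgroup. Define √H := {g∈G : ∃ r ≥ 1, g^r∈H}. Then: (1) √H is a subgroup of G; (2) H has finite index in every finitely generated subgroup K of G with H ≤ K ≤ √H; (3) every g∈√H commensurates H, i.e., H and gHg⁻¹ are commensurable subgroups, so that √H is contained in the commensurator of H in G. -/
open Pointwise
open scoped commutatorElement

universe u

section CommAux

variable {G : Type*} [Group G]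

private lemma comm_mul_right_aux (a b c : G) : ⁅a, b * c⁆ = ⁅a, b⁆ * (b * ⁅a, c⁆ * b⁻¹) := by
  simp only [commutatorElement_def]; group

private lemma comm_mul_left_aux (a b c : G) : ⁅a * b, c⁆ = (a * ⁅b, c⁆ * a⁻¹) * ⁅a, c⁆ := by
  simp only [commutatorElement_def]; group

private lemma comm_pow_right (a b : G) (hcen : ∀ y w : G, Commute ⁅a, y⁆ w) (n : ℕ) :
    ⁅a, b ^ n⁆ = ⁅a, b⁆ ^ n := by
  induction n with
  | zero => simp
  | succ n ih =>
    have habs : b ^ n * ⁅a, b⁆ * (b ^ n)⁻¹ = ⁅a, b⁆ := by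
      rw [← (hcen b (b ^ n)).eq, mul_assoc, mul_inv_cancel, mul_one]
    rw [pow_succ, comm_mul_right_aux, ih, habs, ← pow_succ]

private lemma comm_pow_left (a b : G) (hcen : ∀ i : ℕ, ∀ w : G, Commute ⁅a ^ i, b⁆ w) (n : ℕ) :
    ⁅a ^ n, b⁆ = ⁅a, b⁆ ^ n := by
  induction n with
  | zero => simp
  | succ n ih =>
    have habs : a * ⁅a ^ n, b⁆ * a⁻¹ = ⁅a ^ n, b⁆ := by
      rw [← (hcen n a).eq, mul_assoc, mul_inv_cancel, mul_one]
    rw [pow_succ', comm_mul_left_aux, habs, ih, ← pow_succ]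

private lemma lcs_succ' (G : Type*) [Group G] (n : ℕ) :
    Subgroup.lowerCentralSeries (⊤ : Subgroup G) (n + 1) = ⁅Subgroup.lowerCentralSeries (⊤ : Subgroup G) n, ⊤⁆ := rfl

private lemma lcs_map_surjective {G H : Type*} [Group G] [Group H] (f : G →* H)
    (hf : Function.Surjective f) (n : ℕ) :
    (Subgroup.lowerCentralSeries (⊤ : Subgroup G) n).map f = Subgroup.lowerCentralSeries (⊤ : Subgroup H) n := by
  induction n with
  | zero =>
    rw [lowerCentralSeries_zero, lowerCentralSeries_zero]
    exact Subgroup.map_top_of_surjective f hf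
  | succ n ih =>
    rw [lcs_succ', lcs_succ', Subgroup.map_commutator, ih,
      Subgroup.map_top_of_surjective f hf]

end CommAux

section Core

/-- In a group whose elements all commute, if generators have powers in `S`, so does
every element. -/
private lemma pow_mem_of_forall_commute {Q : Type*} [Group Q]
    (hcomm : ∀ a b : Q, a * b = b * a) {X : Set Q} {S : Subgroup Q}
    (hX : Subgroup.closure X = ⊤) (hS : ∀ x ∈ X, ∃ r, 1 ≤ r ∧ x ^ r ∈ S) (g : Q) :
    ∃ k, 1 ≤ k ∧ g ^ k ∈ S := by
  have hg : g ∈ Subgroup.closure X := hX ▸ Subgroup.mem_top g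
  refine Subgroup.closure_induction (fun x hx => hS x hx)
    ⟨1, le_rfl, by simpa using S.one_mem⟩ ?_ ?_ hg
  · rintro x y _ _ ⟨k1, hk1, hx⟩ ⟨k2, hk2, hy⟩
    have hc : Commute x y := hcomm x y
    refine ⟨k1 * k2, Nat.mul_pos hk1 hk2, ?_⟩
    rw [hc.mul_pow]
    exact S.mul_mem (by rw [pow_mul]; exact pow_mem hx k2)
      (by rw [mul_comm k1 k2, pow_mul]; exact pow_mem hy k1)
  · rintro x _ ⟨k, hk, hx⟩
    exact ⟨k, hk, by rw [inv_pow]; exact S.inv_mem hx⟩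

private lemma pow_mem_sup_of_quot {L : Type*} [Group L] {N : Subgroup L} [N.Normal]
    {S : Subgroup L} {g : L} {k : ℕ}
    (h : (QuotientGroup.mk' N g) ^ k ∈ S.map (QuotientGroup.mk' N)) : g ^ k ∈ S ⊔ N := by
  rw [← map_pow] at h
  obtain ⟨s, hs, hes⟩ := h
  have hker : s⁻¹ * g ^ k ∈ N := by
    have : QuotientGroup.mk' N (s⁻¹ * g ^ k) = 1 := by
      rw [map_mul, map_inv, hes, inv_mul_cancel]
    rwa [← QuotientGroup.ker_mk' N, MonoidHom.mem_ker]
  have : g ^ k = s * (s⁻¹ * g ^ k) := by group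
  rw [this]
  exact Subgroup.mul_mem _ (Subgroup.mem_sup_left hs) (Subgroup.mem_sup_right hker)

/-- Statement (a): in a group of class `≤ n`, every element has a positive power in any
subgroup containing positive powers of a generating set. -/
private def GStat (n : ℕ) : Prop :=
  ∀ (L : Type u) [Group L], Subgroup.lowerCentralSeries (⊤ : Subgroup L) n = ⊥ →
    ∀ (X : Set L) (S : Subgroup L), Subgroup.closure X = ⊤ →
      (∀ x ∈ X, ∃ r, 1 ≤ r ∧ x ^ r ∈ S) → ∀ g : L, ∃ k, 1 ≤ k ∧ g ^ k ∈ S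

/-- Statement (b): every element of the `n`-th lower central term has a positive power in
`γ_n(S) ⬝ γ_{n+1}(L)`. -/
private def MStat (n : ℕ) : Prop :=
  ∀ (L : Type u) [Group L] (X : Set L) (S : Subgroup L), Subgroup.closure X = ⊤ →
    (∀ x ∈ X, ∃ r, 1 ≤ r ∧ x ^ r ∈ S) →
    ∀ u ∈ Subgroup.lowerCentralSeries (⊤ : Subgroup L) n,
      ∃ k, 1 ≤ k ∧
        u ^ k ∈ ((Subgroup.lowerCentralSeries (⊤ : Subgroup ↥S) n).map S.subtype) ⊔ Subgroup.lowerCentralSeries (⊤ : Subgroup L) (n + 1)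

private lemma pow_mem_sup_lcs {n : ℕ} (hG : GStat.{u} n) {L : Type u} [Group L] {X : Set L}
    (S : Subgroup L) (hX : Subgroup.closure X = ⊤)
    (hS : ∀ x ∈ X, ∃ r, 1 ≤ r ∧ x ^ r ∈ S) (g : L) :
    ∃ k, 1 ≤ k ∧ g ^ k ∈ S ⊔ Subgroup.lowerCentralSeries (⊤ : Subgroup L) n := by
  set N := Subgroup.lowerCentralSeries (⊤ : Subgroup L) n with hN
  set π := QuotientGroup.mk' N with hπdef
  have hπ : Function.Surjective π := QuotientGroup.mk'_surjective N
  have hbot : Subgroup.lowerCentralSeries (⊤ : Subgroup (L ⧸ N)) n = ⊥ := by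
    rw [← lcs_map_surjective π hπ n, Subgroup.map_eq_bot_iff, QuotientGroup.ker_mk']
  have hXh : Subgroup.closure (π '' X) = (⊤ : Subgroup (L ⧸ N)) := by
    rw [← MonoidHom.map_closure, hX, Subgroup.map_top_of_surjective π hπ]
  have hSh : ∀ x ∈ π '' X, ∃ r, 1 ≤ r ∧ x ^ r ∈ S.map π := by
    rintro _ ⟨x, hx, rfl⟩
    obtain ⟨r, hr, h⟩ := hS x hx
    exact ⟨r, hr, by rw [← map_pow]; exact Subgroup.mem_map_of_mem π h⟩
  obtain ⟨k, hk, hmem⟩ := hG (L ⧸ N) hbot (π '' X) (S.map π) hXh hSh (π g)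
  exact ⟨k, hk, pow_mem_sup_of_quot hmem⟩

private lemma gstat_zero : GStat.{u} 0 := by
  intro L _ hbot X S hX hS g
  have : g ∈ (⊥ : Subgroup L) := hbot ▸ Subgroup.mem_top g
  exact ⟨1, le_rfl, by rw [pow_one, Subgroup.mem_bot.mp this]; exact S.one_mem⟩

private lemma gstat_one : GStat.{u} 1 := by
  intro L _ hbot X S hX hS g
  have hcomm : ∀ a b : L, a * b = b * a := by
    intro a b
    have h1 : ⁅a, b⁆ ∈ Subgroup.lowerCentralSeries (⊤ : Subgroup L) 1 :=
      (lcs_succ' L 0) ▸ Subgroup.commutator_mem_commutator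
        (by rw [lowerCentralSeries_zero]; exact Subgroup.mem_top a) (Subgroup.mem_top b)
    rw [hbot] at h1
    exact (commutatorElement_eq_one_iff_commute.mp (Subgroup.mem_bot.mp h1)).eq
  exact pow_mem_of_forall_commute hcomm hX hS g

private lemma mstat_zero : MStat.{u} 0 := by
  intro L _ X S hX hS u _
  obtain ⟨k, hk, h⟩ := pow_mem_sup_lcs gstat_one S hX hS u
  refine ⟨k, hk, ?_⟩
  have hmap : (Subgroup.lowerCentralSeries (⊤ : Subgroup ↥S) 0).map S.subtype = S := by
    rw [lowerCentralSeries_zero, ← MonoidHom.range_eq_map, Subgroup.subtype_range]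
  rw [hmap]
  exact h

private lemma GM : ∀ n : ℕ, GStat.{u} n ∧ MStat.{u} n := by
  intro n
  induction n with
  | zero => exact ⟨gstat_zero, mstat_zero⟩
  | succ n ih =>
    obtain ⟨hGn, hMn⟩ := ih
    have hG1 : GStat.{u} (n + 1) := by
      intro L _ hbot X S hX hS g
      obtain ⟨k, hk, hgk⟩ := pow_mem_sup_lcs hGn S hX hS g
      have hgk' : g ^ k ∈ ((S : Set L) * (Subgroup.lowerCentralSeries (⊤ : Subgroup L) n : Set L)) := by
        rw [← Subgroup.mul_normal]; exact hgk
      obtain ⟨s, hs, z, hz, hsz⟩ := Set.mem_mul.mp hgk'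
      have hzc : ∀ y : L, Commute z y := by
        intro y
        have h1 : ⁅z, y⁆ ∈ Subgroup.lowerCentralSeries (⊤ : Subgroup L) (n + 1) :=
          (lcs_succ' L n) ▸ Subgroup.commutator_mem_commutator hz (Subgroup.mem_top y)
        rw [hbot] at h1
        exact commutatorElement_eq_one_iff_commute.mp (Subgroup.mem_bot.mp h1)
      obtain ⟨t, ht, hzt⟩ := hMn L X S hX hS z hz
      rw [hbot] at hzt
      have hztS : z ^ t ∈ S := by
        have h2 : z ^ t ∈ (Subgroup.lowerCentralSeries (⊤ : Subgroup ↥S) n).map S.subtype := by simpa using hzt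
        exact Subgroup.map_subtype_le _ h2
      refine ⟨k * t, Nat.mul_pos hk ht, ?_⟩
      rw [pow_mul, ← hsz, ((hzc s).symm.mul_pow t)]
      exact S.mul_mem (pow_mem hs t) hztS
    refine ⟨hG1, ?_⟩
    intro L _ X S hX hS u hu
    set N := Subgroup.lowerCentralSeries (⊤ : Subgroup L) (n + 2) with hN
    set π := QuotientGroup.mk' N with hπdef
    have hπ : Function.Surjective π := QuotientGroup.mk'_surjective N
    have hQbot : Subgroup.lowerCentralSeries (⊤ : Subgroup (L ⧸ N)) (n + 2) = ⊥ := by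
      rw [← lcs_map_surjective π hπ (n + 2), Subgroup.map_eq_bot_iff, QuotientGroup.ker_mk']
    have hcent : ∀ w ∈ Subgroup.lowerCentralSeries (⊤ : Subgroup (L ⧸ N)) (n + 1), ∀ y, Commute w y := by
      intro w hw y
      have h1 : ⁅w, y⁆ ∈ Subgroup.lowerCentralSeries (⊤ : Subgroup (L ⧸ N)) (n + 2) :=
        (lcs_succ' (L ⧸ N) (n + 1)) ▸
          Subgroup.commutator_mem_commutator hw (Subgroup.mem_top y)
      rw [hQbot] at h1
      exact commutatorElement_eq_one_iff_commute.mp (Subgroup.mem_bot.mp h1)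
    set Sh := S.map π with hShdef
    have hXh : Subgroup.closure (π '' X) = (⊤ : Subgroup (L ⧸ N)) := by
      rw [← MonoidHom.map_closure, hX, Subgroup.map_top_of_surjective π hπ]
    have hSh : ∀ x ∈ π '' X, ∃ r, 1 ≤ r ∧ x ^ r ∈ Sh := by
      rintro _ ⟨x, hx, rfl⟩
      obtain ⟨r, hr, h⟩ := hS x hx
      exact ⟨r, hr, by rw [← map_pow]; exact Subgroup.mem_map_of_mem π h⟩
    set W := (Subgroup.lowerCentralSeries (⊤ : Subgroup ↥Sh) (n + 1)).map Sh.subtype with hWdef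
    have key : ∀ w ∈ Subgroup.lowerCentralSeries (⊤ : Subgroup (L ⧸ N)) (n + 1), ∃ k, 1 ≤ k ∧ w ^ k ∈ W := by
      intro w hw
      have hw' : w ∈ Subgroup.closure
          {x | ∃ g₁ ∈ Subgroup.lowerCentralSeries (⊤ : Subgroup (L ⧸ N)) n, ∃ g₂ ∈ (⊤ : Subgroup (L ⧸ N)), ⁅g₁, g₂⁆ = x} := by
        rw [← Subgroup.commutator_def, ← lcs_succ']
        exact hw
      have hback : ∀ x, x ∈ Subgroup.closure
          {x | ∃ g₁ ∈ Subgroup.lowerCentralSeries (⊤ : Subgroup (L ⧸ N)) n, ∃ g₂ ∈ (⊤ : Subgroup (L ⧸ N)), ⁅g₁, g₂⁆ = x} →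
          x ∈ Subgroup.lowerCentralSeries (⊤ : Subgroup (L ⧸ N)) (n + 1) := by
        intro x hx
        rwa [← Subgroup.commutator_def, ← lcs_succ'] at hx
      refine Subgroup.closure_induction ?_ ⟨1, le_rfl, by simpa using W.one_mem⟩ ?_ ?_ hw'
      · -- generators
        rintro x ⟨a, ha, b, -, rfl⟩
        have hcomm_a : ∀ y w', Commute ⁅a, y⁆ w' := fun y w' =>
          hcent _ ((lcs_succ' (L ⧸ N) n) ▸
            Subgroup.commutator_mem_commutator ha (Subgroup.mem_top y)) w'
        obtain ⟨k1, hk1, hbk⟩ := pow_mem_sup_lcs hG1 Sh hXh hSh b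
        have hbk' : b ^ k1 ∈ ((Sh : Set (L ⧸ N)) * (Subgroup.lowerCentralSeries (⊤ : Subgroup (L ⧸ N)) (n + 1) : Set (L ⧸ N))) := by
          rw [← Subgroup.mul_normal]; exact hbk
        obtain ⟨s, hs, v, hv, hsv⟩ := Set.mem_mul.mp hbk'
        have e1 : ⁅a, b⁆ ^ k1 = ⁅a, b ^ k1⁆ := (comm_pow_right a b hcomm_a k1).symm
        have hv1 : ⁅a, v⁆ = 1 :=
          commutatorElement_eq_one_iff_commute.mpr (hcent v hv a).symm
        have e2 : ⁅a, b ^ k1⁆ = ⁅a, s⁆ := by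
          rw [← hsv, comm_mul_right_aux, hv1]
          group
        obtain ⟨k2, hk2, hak⟩ := hMn (L ⧸ N) (π '' X) Sh hXh hSh a ha
        have hak' : a ^ k2 ∈ ((((Subgroup.lowerCentralSeries (⊤ : Subgroup ↥Sh) n).map Sh.subtype) : Set (L ⧸ N)) *
            (Subgroup.lowerCentralSeries (⊤ : Subgroup (L ⧸ N)) (n + 1) : Set (L ⧸ N))) := by
          rw [← Subgroup.mul_normal]; exact hak
        obtain ⟨s', hs', v', hv', hsv'⟩ := Set.mem_mul.mp hak'
        have hcen_pow : ∀ i : ℕ, ∀ w', Commute ⁅a ^ i, s⁆ w' := fun i w' =>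
          hcent _ ((lcs_succ' (L ⧸ N) n) ▸
            Subgroup.commutator_mem_commutator (pow_mem ha i) (Subgroup.mem_top s)) w'
        have e3 : ⁅a, s⁆ ^ k2 = ⁅a ^ k2, s⁆ := (comm_pow_left a s hcen_pow k2).symm
        have hv'1 : ⁅v', s⁆ = 1 :=
          commutatorElement_eq_one_iff_commute.mpr (hcent v' hv' s)
        have e4 : ⁅a ^ k2, s⁆ = ⁅s', s⁆ := by
          rw [← hsv', comm_mul_left_aux, hv'1]
          group
        have e5 : ⁅s', s⁆ ∈ W := by
          obtain ⟨u', hu', rfl⟩ := hs'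
          have hmem : ⁅u', (⟨s, hs⟩ : ↥Sh)⁆ ∈ Subgroup.lowerCentralSeries (⊤ : Subgroup ↥Sh) (n + 1) :=
            (lcs_succ' (↥Sh) n) ▸
              Subgroup.commutator_mem_commutator hu' (Subgroup.mem_top _)
          exact ⟨_, hmem, by rw [map_commutatorElement]; rfl⟩
        refine ⟨k1 * k2, Nat.mul_pos hk1 hk2, ?_⟩
        rw [pow_mul, e1, e2, e3, e4]
        exact e5
      · -- mul
        rintro x y hx _ ⟨k1, hk1, hxk⟩ ⟨k2, hk2, hyk⟩
        have hx' : x ∈ Subgroup.lowerCentralSeries (⊤ : Subgroup (L ⧸ N)) (n + 1) := hback x hx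
        have hc : Commute x y := hcent x hx' y
        refine ⟨k1 * k2, Nat.mul_pos hk1 hk2, ?_⟩
        rw [hc.mul_pow]
        exact W.mul_mem (by rw [pow_mul]; exact pow_mem hxk k2)
          (by rw [mul_comm k1 k2, pow_mul]; exact pow_mem hyk k1)
      · -- inv
        rintro x _ ⟨k, hk, hxk⟩
        exact ⟨k, hk, by rw [inv_pow]; exact W.inv_mem hxk⟩
    have huQ : π u ∈ Subgroup.lowerCentralSeries (⊤ : Subgroup (L ⧸ N)) (n + 1) :=
      lowerCentralSeries.map π (n + 1) (Subgroup.mem_map_of_mem π hu)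
    obtain ⟨k, hk, hmem⟩ := key (π u) huQ
    have hWtrans : W = ((Subgroup.lowerCentralSeries (⊤ : Subgroup ↥S) (n + 1)).map S.subtype).map π := by
      have h1 : Subgroup.lowerCentralSeries (⊤ : Subgroup ↥Sh) (n + 1) =
          (Subgroup.lowerCentralSeries (⊤ : Subgroup ↥S) (n + 1)).map (π.subgroupMap S) :=
        (lcs_map_surjective (π.subgroupMap S) (π.subgroupMap_surjective S) (n + 1)).symm
      have h2 : Sh.subtype.comp (π.subgroupMap S) = π.comp S.subtype :=
        MonoidHom.ext fun x => rfl
      rw [hWdef, h1, Subgroup.map_map, Subgroup.map_map, h2]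
    rw [hWtrans] at hmem
    exact ⟨k, hk, pow_mem_sup_of_quot hmem⟩

end Core

section Index

private lemma lemA {A : Type u} [CommGroup A] [Group.FG A] (B : Subgroup A)
    (h : ∀ a : A, ∃ r, 1 ≤ r ∧ a ^ r ∈ B) : B.index ≠ 0 := by
  have htor : Monoid.IsTorsion (A ⧸ B) := by
    intro q
    obtain ⟨a, rfl⟩ := QuotientGroup.mk'_surjective B q
    obtain ⟨r, hr, hm⟩ := h a
    rw [isOfFinOrder_iff_pow_eq_one]
    refine ⟨r, hr, ?_⟩
    rw [← map_pow, ← MonoidHom.mem_ker, QuotientGroup.ker_mk']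
    exact hm
  have hfin : Finite (A ⧸ B) := CommGroup.finite_of_fg_torsion _ htor
  have : Nat.card (A ⧸ B) ≠ 0 := Nat.card_ne_zero.mpr ⟨⟨1⟩, hfin⟩
  simpa [Subgroup.index] using this

private lemma lemB : ∀ (n : ℕ) (K : Type u) [Group K], ∀ [Group.IsNilpotent K] [Group.FG K],
    Group.nilpotencyClass K ≤ n → ∀ H : Subgroup K,
      (∀ g : K, ∃ r, 1 ≤ r ∧ g ^ r ∈ H) → H.index ≠ 0 := by
  intro n
  induction n with
  | zero =>
    intro K _ _ _ hcls H _
    haveI : Subsingleton K :=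
      nilpotencyClass_zero_iff_subsingleton.mp (Nat.le_zero.mp hcls)
    have hHtop : H = ⊤ :=
      (Subgroup.eq_top_iff' _).mpr fun x => by rw [Subsingleton.elim x 1]; exact H.one_mem
    rw [hHtop, Subgroup.index_top]
    exact one_ne_zero
  | succ n IH =>
    intro K _ _ _ hcls H hH
    set Z := Subgroup.center K with hZdef
    set π := QuotientGroup.mk' Z with hπdef
    have hπ : Function.Surjective π := QuotientGroup.mk'_surjective Z
    have hcls' : Group.nilpotencyClass (K ⧸ Z) ≤ n := by
      rw [nilpotencyClass_quotient_center]
      exact Nat.sub_le_of_le_add (by simpa using hcls)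
    have hHbar : ∀ q : K ⧸ Z, ∃ r, 1 ≤ r ∧ q ^ r ∈ H.map π := by
      intro q
      obtain ⟨a, rfl⟩ := hπ q
      obtain ⟨r, hr, h⟩ := hH a
      exact ⟨r, hr, by rw [← map_pow]; exact Subgroup.mem_map_of_mem π h⟩
    have hidx : (H.map π).index ≠ 0 := IH (K ⧸ Z) hcls' (H.map π) hHbar
    have hJidx : (H ⊔ Z).index ≠ 0 := by
      have hcomap := Subgroup.index_comap_of_surjective (H.map π) hπ
      rw [Subgroup.comap_map_eq, QuotientGroup.ker_mk'] at hcomap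
      rw [← hcomap] at hidx
      exact hidx
    haveI : (H ⊔ Z).FiniteIndex := ⟨hJidx⟩
    have hJfg : (H ⊔ Z).FG :=
      (Group.fg_iff_subgroup_fg _).mp (Subgroup.fg_of_index_ne_zero (H ⊔ Z))
    obtain ⟨T, hTcl, hTfin⟩ := (Subgroup.fg_iff _).mp hJfg
    have hdecomp : ∀ t ∈ T, ∃ h z, h ∈ H ∧ z ∈ Z ∧ h * z = t := by
      intro t ht
      have htJ : t ∈ H ⊔ Z := hTcl ▸ Subgroup.subset_closure ht
      have htm : t ∈ ((H : Set K) * (Z : Set K)) := by rw [← Subgroup.mul_normal]; exact htJ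
      obtain ⟨h, hh, z, hz, hhz⟩ := Set.mem_mul.mp htm
      exact ⟨h, z, hh, hz, hhz⟩
    choose! f1 f2 hf1 hf2 hf12 using hdecomp
    set Z0 := Subgroup.closure (f2 '' T) with hZ0def
    have hZ0le : Z0 ≤ Z :=
      (Subgroup.closure_le _).mpr (by rintro _ ⟨t, ht, rfl⟩; exact hf2 t ht)
    have hJ2 : H ⊔ Z = H ⊔ Z0 := by
      apply le_antisymm
      · rw [← hTcl]
        refine (Subgroup.closure_le _).mpr fun t ht => ?_
        rw [← hf12 t ht]
        exact Subgroup.mul_mem _ (Subgroup.mem_sup_left (hf1 t ht))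
          (Subgroup.mem_sup_right (Subgroup.subset_closure (Set.mem_image_of_mem f2 ht)))
      · exact sup_le_sup_left hZ0le H
    letI : CommGroup (↥Z0) :=
      { (inferInstance : Group (↥Z0)) with
        mul_comm := fun a b =>
          Subtype.ext (Subgroup.mem_center_iff.mp (hZ0le b.2) (↑a)) }
    haveI : Group.FG (↥Z0) :=
      (Group.fg_iff_subgroup_fg _).mpr
        ((Subgroup.fg_iff _).mpr ⟨f2 '' T, rfl, hTfin.image f2⟩)
    have hrelZ0 : (H.subgroupOf Z0).index ≠ 0 := by
      refine lemA (H.subgroupOf Z0) fun a => ?_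
      obtain ⟨r, hr, h⟩ := hH (↑a)
      exact ⟨r, hr, by rw [Subgroup.mem_subgroupOf]; simpa using h⟩
    haveI : Z0.Normal := by
      constructor
      intro z hz g
      have hc := Subgroup.mem_center_iff.mp (hZ0le hz) g
      rw [hc, mul_assoc, mul_inv_cancel, mul_one]
      exact hz
    set J := H ⊔ Z0 with hJdef
    have hZ0J : Z0 ≤ J := le_sup_right
    have hHJ : H ≤ J := le_sup_left
    have hrelJ : H.relIndex J ≠ 0 := by
      have hfin : Finite (↥Z0 ⧸ H.subgroupOf Z0) := Nat.finite_of_card_ne_zero hrelZ0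
      let φ : (↥Z0 ⧸ H.subgroupOf Z0) → (↥J ⧸ H.subgroupOf J) :=
        Quotient.map' (fun z => Subgroup.inclusion hZ0J z) (by
          intro a b hab
          rw [QuotientGroup.leftRel_apply] at hab ⊢
          rw [Subgroup.mem_subgroupOf] at hab ⊢
          exact hab)
      have hφ : Function.Surjective φ := by
        intro q
        induction q using Quotient.inductionOn' with
        | h x =>
          obtain ⟨xv, hxJ⟩ := x
          have hxm : xv ∈ ((H : Set K) * (Z0 : Set K)) := by
            rw [← Subgroup.mul_normal]; exact hxJ
          obtain ⟨h, hh, z, hz, hhz⟩ := Set.mem_mul.mp hxm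
          refine ⟨Quotient.mk'' ⟨z, hz⟩, ?_⟩
          have : φ (Quotient.mk'' ⟨z, hz⟩) = Quotient.mk'' (Subgroup.inclusion hZ0J ⟨z, hz⟩) :=
            Quotient.map'_mk'' _ _ _
          rw [this]
          apply Quotient.sound'
          rw [QuotientGroup.leftRel_apply, Subgroup.mem_subgroupOf]
          have hzc := Subgroup.mem_center_iff.mp (hZ0le hz) h
          show (z : K)⁻¹ * xv ∈ H
          rw [← hhz, hzc, ← mul_assoc, inv_mul_cancel, one_mul]
          exact hh
      have hfin2 : Finite (↥J ⧸ H.subgroupOf J) := Finite.of_surjective φ hφ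
      have : Nat.card (↥J ⧸ H.subgroupOf J) ≠ 0 := Nat.card_ne_zero.mpr ⟨⟨Quotient.mk'' 1⟩, hfin2⟩
      simpa [Subgroup.relIndex, Subgroup.index] using this
    have hJidx2 : J.index ≠ 0 := by rw [← hJ2]; exact hJidx
    rw [← Subgroup.relIndex_mul_index hHJ]
    exact Nat.mul_ne_zero hrelJ hJidx2

end Index

section Assembly

private lemma root_mul {G : Type u} [Group G] [Group.IsNilpotent G] (H : Subgroup G) {a b : G}
    (ha : ∃ r, 1 ≤ r ∧ a ^ r ∈ H) (hb : ∃ r, 1 ≤ r ∧ b ^ r ∈ H) :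
    ∃ r, 1 ≤ r ∧ (a * b) ^ r ∈ H := by
  set L := Subgroup.closure ({a, b} : Set G) with hLdef
  obtain ⟨c, hc⟩ := nilpotent_iff_lowerCentralSeries.mp (inferInstance : Group.IsNilpotent ↥L)
  have haL : a ∈ L := Subgroup.subset_closure (by simp)
  have hbL : b ∈ L := Subgroup.subset_closure (by simp)
  have hX : Subgroup.closure (((↑) : ↥L → G) ⁻¹' {a, b}) = ⊤ :=
    Subgroup.closure_closure_coe_preimage
  have hpow : ∀ x ∈ (((↑) : ↥L → G) ⁻¹' {a, b}), ∃ r, 1 ≤ r ∧ x ^ r ∈ H.subgroupOf L := by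
    rintro ⟨x, hxL⟩ hx
    rcases hx with h1 | h2
    · obtain ⟨r, hr, h⟩ := ha
      refine ⟨r, hr, ?_⟩
      have hx : x = a := h1
      rw [Subgroup.mem_subgroupOf]
      simp only [SubgroupClass.coe_pow]
      rw [hx]
      exact h
    · obtain ⟨r, hr, h⟩ := hb
      refine ⟨r, hr, ?_⟩
      have hx : x = b := h2
      rw [Subgroup.mem_subgroupOf]
      simp only [SubgroupClass.coe_pow]
      rw [hx]
      exact h
  obtain ⟨k, hk, hmem⟩ :=
    (GM c).1 (↥L) hc _ (H.subgroupOf L) hX hpow ⟨a * b, mul_mem haL hbL⟩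
  refine ⟨k, hk, ?_⟩
  rw [Subgroup.mem_subgroupOf] at hmem
  simpa using hmem

private def rootSubgroup {G : Type u} [Group G] [Group.IsNilpotent G] (H : Subgroup G) :
    Subgroup G where
  carrier := {g : G | ∃ r : ℕ, 1 ≤ r ∧ g ^ r ∈ H}
  one_mem' := ⟨1, le_rfl, by simpa using H.one_mem⟩
  mul_mem' := fun ha hb => root_mul H ha hb
  inv_mem' := by
    rintro x ⟨r, hr, h⟩
    exact ⟨r, hr, by rw [inv_pow]; exact H.inv_mem h⟩

end Assembly

/-- For a finitely generated subgroup `H` of a nilpotent group `G`, the set of roots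
`√H = {g : ∃ r ≥ 1, g ^ r ∈ H}` is a subgroup, `H` has finite index in every finitely
generated subgroup of `√H` containing `H`, and every element of `√H` commensurates `H`
(Corollary `cor:finite-ext`). -/
theorem stmt_14 {G : Type*} [Group G] [Group.IsNilpotent G]
    (H : Subgroup G) (hH : H.FG) :
    (∃ K : Subgroup G, (K : Set G) = {g : G | ∃ r : ℕ, 1 ≤ r ∧ g ^ r ∈ H}) ∧
    (∀ K : Subgroup G, K.FG → H ≤ K →
      (K : Set G) ⊆ {g : G | ∃ r : ℕ, 1 ≤ r ∧ g ^ r ∈ H} → H.relIndex K ≠ 0) ∧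
    (∀ g : G, (∃ r : ℕ, 1 ≤ r ∧ g ^ r ∈ H) →
      Subgroup.Commensurable H (Subgroup.map (MulAut.conj g).toMonoidHom H)) := by
  classical
  set Kroot : Subgroup G := rootSubgroup H with hKrootdef
  have hKrootcoe : (Kroot : Set G) = {g : G | ∃ r : ℕ, 1 ≤ r ∧ g ^ r ∈ H} := rfl
  have part2 : ∀ K : Subgroup G, K.FG → H ≤ K →
      (K : Set G) ⊆ {g : G | ∃ r : ℕ, 1 ≤ r ∧ g ^ r ∈ H} → H.relIndex K ≠ 0 := by
    intro K hKfg hHK hsub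
    haveI : Group.FG (↥K) := (Group.fg_iff_subgroup_fg K).mpr hKfg
    have hyp : ∀ x : ↥K, ∃ r, 1 ≤ r ∧ x ^ r ∈ H.subgroupOf K := by
      intro x
      obtain ⟨r, hr, h⟩ := hsub x.2
      refine ⟨r, hr, ?_⟩
      rw [Subgroup.mem_subgroupOf]
      simpa using h
    exact lemB (Group.nilpotencyClass (↥K)) (↥K) le_rfl (H.subgroupOf K) hyp
  refine ⟨⟨Kroot, rfl⟩, part2, ?_⟩
  intro g hg
  obtain ⟨S1, hS1, hS1fin⟩ := (Subgroup.fg_iff H).mp hH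
  set K := H ⊔ Subgroup.closure {g} with hKdef
  have hKfg : K.FG := by
    refine (Subgroup.fg_iff _).mpr ⟨S1 ∪ {g}, ?_, hS1fin.union (Set.finite_singleton g)⟩
    rw [Subgroup.closure_union, hS1]
  have hHK : H ≤ K := le_sup_left
  have hgK : g ∈ K := Subgroup.mem_sup_right (Subgroup.subset_closure rfl)
  have hKsub : (K : Set G) ⊆ {x : G | ∃ r : ℕ, 1 ≤ r ∧ x ^ r ∈ H} := by
    have hle : K ≤ Kroot := by
      refine sup_le ?_ ((Subgroup.closure_le _).mpr ?_)
      · intro h hh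
        exact ⟨1, le_rfl, by simpa using hh⟩
      · intro x hx
        rw [Set.mem_singleton_iff.mp hx]
        exact hg
    intro x hx
    exact hle hx
  have hrel : H.relIndex K ≠ 0 := part2 K hKfg hHK hKsub
  have hKrelH : K.relIndex H ≠ 0 := by
    have h1 : K.subgroupOf H = ⊤ := Subgroup.subgroupOf_eq_top.mpr hHK
    show (K.subgroupOf H).index ≠ 0
    rw [h1, Subgroup.index_top]
    exact one_ne_zero
  have hcomHK : Subgroup.Commensurable H K := ⟨hrel, hKrelH⟩
  have hsmulmem : ∀ (x : G) (P : Subgroup G),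
      x ∈ ConjAct.toConjAct g • P ↔ g⁻¹ * x * g ∈ P := by
    intro x P
    rw [Subgroup.mem_pointwise_smul_iff_inv_smul_mem]
    simp [ConjAct.smul_def, mul_assoc]
  have hmapeq : Subgroup.map (MulAut.conj g).toMonoidHom H = ConjAct.toConjAct g • H := by
    ext x
    rw [hsmulmem]
    constructor
    · rintro ⟨h, hh, rfl⟩
      simpa [MulAut.conj_apply, mul_assoc] using hh
    · intro hx
      exact ⟨g⁻¹ * x * g, hx, by simp [MulAut.conj_apply]; group⟩
  have hKconj : ConjAct.toConjAct g • K = K := by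
    ext x
    rw [hsmulmem]
    constructor
    · intro hx
      have : g * (g⁻¹ * x * g) * g⁻¹ ∈ K := mul_mem (mul_mem hgK hx) (inv_mem hgK)
      simpa [mul_assoc] using this
    · intro hx
      exact mul_mem (mul_mem (inv_mem hgK) hx) hgK
  have hconj : Subgroup.Commensurable (ConjAct.toConjAct g • H) (ConjAct.toConjAct g • K) :=
    (Subgroup.Commensurable.commensurable_conj _).mp hcomHK
  rw [hKconj] at hconj
  rw [hmapeq]
  exact hcomHK.trans hconj.symm
end

section
/- Let G be a group and (G_i)_{i∈ℕ} a prefiltration on G. For each i∈ℕ set G_i^□ := {(g_0,g_1)∈G_i×G_i : g_0⁻¹g_1∈G_{i+1}}. Then each G_i^□ is a subgroup of G×G, the chain is descending (G_0^□ ⊇ G_1^□ ⊇ ⋯), and ⁅G_i^□, G_j^□⁆ ⊆ G_{i+j}^□ for all i,j∈ℕ; that is, (G_i^□)_{i∈ℕ} is a prefiltration on G×G. -/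
/-- **The cube construction preserves prefiltrations**: given a prefiltration `(G_i)` on `G`,
the sets `G_i^□ = {(g₀,g₁) ∈ G_i × G_i : g₀⁻¹ g₁ ∈ G_{i+1}}` form a prefiltration on `G × G`. -/
theorem stmt_16 {G : Type*} [Group G] (Gs : ℕ → Subgroup G)
    (hanti : ∀ i j : ℕ, i ≤ j → Gs j ≤ Gs i)
    (hcomm : ∀ i j : ℕ, ∀ a ∈ Gs i, ∀ b ∈ Gs j, a⁻¹ * b⁻¹ * a * b ∈ Gs (i + j)) :
    ∃ Q : ℕ → Subgroup (G × G),
      (∀ i, (Q i : Set (G × G)) =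
        {p : G × G | p.1 ∈ Gs i ∧ p.2 ∈ Gs i ∧ p.1⁻¹ * p.2 ∈ Gs (i + 1)}) ∧
      (∀ i j : ℕ, i ≤ j → Q j ≤ Q i) ∧
      (∀ i j : ℕ, ∀ a ∈ Q i, ∀ b ∈ Q j, a⁻¹ * b⁻¹ * a * b ∈ Q (i + j)) := by
  have conj : ∀ k m : ℕ, ∀ g ∈ Gs k, ∀ x ∈ Gs m, g⁻¹ * x * g ∈ Gs m := by
    intro k m g hg x hx
    have h2 : g⁻¹ * x * g = x * (x⁻¹ * g⁻¹ * x * g) := by group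
    rw [h2]
    exact mul_mem hx (hanti m (m + k) (Nat.le_add_right _ _) (hcomm m k x hx g hg))
  refine ⟨fun i =>
    { carrier := {p : G × G | p.1 ∈ Gs i ∧ p.2 ∈ Gs i ∧ p.1⁻¹ * p.2 ∈ Gs (i + 1)}
      one_mem' := ⟨one_mem _, one_mem _, by simpa using one_mem _⟩
      mul_mem' := ?_
      inv_mem' := ?_ }, fun i => rfl, ?_, ?_⟩
  · rintro ⟨a0, a1⟩ ⟨b0, b1⟩ ⟨ha0, ha1, ha⟩ ⟨hb0, hb1, hb⟩
    refine ⟨mul_mem ha0 hb0, mul_mem ha1 hb1, ?_⟩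
    have h : (a0 * b0)⁻¹ * (a1 * b1) = (b0⁻¹ * (a0⁻¹ * a1) * b0) * (b0⁻¹ * b1) := by group
    exact h ▸ mul_mem (conj _ _ b0 hb0 _ ha) hb
  · rintro ⟨a0, a1⟩ ⟨ha0, ha1, ha⟩
    refine ⟨inv_mem ha0, inv_mem ha1, ?_⟩
    have h : (a0⁻¹)⁻¹ * a1⁻¹ = (a0⁻¹)⁻¹ * (a0⁻¹ * a1)⁻¹ * a0⁻¹ := by group
    exact h ▸ conj _ _ (a0⁻¹) (inv_mem ha0) _ (inv_mem ha)
  · rintro i j hij ⟨a0, a1⟩ ⟨ha0, ha1, ha⟩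
    exact ⟨hanti i j hij ha0, hanti i j hij ha1,
      hanti (i + 1) (j + 1) (by omega) ha⟩
  · rintro i j ⟨a0, a1⟩ ⟨ha0, ha1, ha⟩ ⟨b0, b1⟩ ⟨hb0, hb1, hb⟩
    refine ⟨hcomm i j a0 ha0 b0 hb0, hcomm i j a1 ha1 b1 hb1, ?_⟩
    set x := a0⁻¹ * a1 with hxdef
    set y := b0⁻¹ * b1 with hydef
    set c := a0⁻¹ * b0⁻¹ * a0 * b0 with hcdef
    have hc : c ∈ Gs (i + j) := hcomm i j a0 ha0 b0 hb0
    -- s := x⁻¹ * c(a0,y) * x * c(x,y) ∈ Gs (i+j+1)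
    have hs1 : a0⁻¹ * y⁻¹ * a0 * y ∈ Gs (i + j + 1) := by
      have := hcomm i (j + 1) a0 ha0 y hb
      rwa [show i + (j + 1) = i + j + 1 by omega] at this
    have hs2 : x⁻¹ * y⁻¹ * x * y ∈ Gs (i + j + 1) :=
      hanti _ _ (by omega) (hcomm (i + 1) (j + 1) x ha y hb)
    have hs : (x⁻¹ * (a0⁻¹ * y⁻¹ * a0 * y) * x) * (x⁻¹ * y⁻¹ * x * y) ∈ Gs (i + j + 1) :=
      mul_mem (conj (i + 1) _ x ha _ hs1) hs2
    have h1 : c⁻¹ * ((x⁻¹ * (a0⁻¹ * y⁻¹ * a0 * y) * x) * (x⁻¹ * y⁻¹ * x * y)) * c ∈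
        Gs (i + j + 1) := conj (i + j) _ c hc _ hs
    have hxy : x * y ∈ Gs 1 :=
      mul_mem (hanti 1 (i + 1) (by omega) ha) (hanti 1 (j + 1) (by omega) hb)
    have h2 : c⁻¹ * (x * y)⁻¹ * c * (x * y) ∈ Gs (i + j + 1) :=
      hcomm (i + j) 1 c hc (x * y) hxy
    have h3 : y⁻¹ * (x⁻¹ * b0⁻¹ * x * b0) * y ∈ Gs (i + j + 1) := by
      have hxb : x⁻¹ * b0⁻¹ * x * b0 ∈ Gs (i + j + 1) := by
        have := hcomm (i + 1) j x ha b0 hb0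
        rwa [show i + 1 + j = i + j + 1 by omega] at this
      exact conj (j + 1) _ y hb _ hxb
    have key : (a0⁻¹ * b0⁻¹ * a0 * b0)⁻¹ * (a1⁻¹ * b1⁻¹ * a1 * b1) =
        (c⁻¹ * ((x⁻¹ * (a0⁻¹ * y⁻¹ * a0 * y) * x) * (x⁻¹ * y⁻¹ * x * y)) * c) *
        (c⁻¹ * (x * y)⁻¹ * c * (x * y)) *
        (y⁻¹ * (x⁻¹ * b0⁻¹ * x * b0) * y) := by
      have ha1' : a1 = a0 * x := by rw [hxdef]; group
      have hb1' : b1 = b0 * y := by rw [hydef]; group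
      rw [ha1', hb1', hcdef]; group
    show (a0⁻¹ * b0⁻¹ * a0 * b0)⁻¹ * (a1⁻¹ * b1⁻¹ * a1 * b1) ∈ Gs (i + j + 1)
    rw [key]
    exact mul_mem (mul_mem h1 h2) h3
end

section
/- Let K be a compact second countable Hausdorff abelian topological group with normalized Haar measure, acting measurably on a probability space (X,μ) such that x↦k·x preserves μ for every k∈K. Let p∈[2,∞) and F∈L^p(X,μ). For each continuous character χ of K (i.e., each continuous homomorphism χ: K→𝕋 into the circle group) define F_χ∈L^p(X,μ) by F_χ(x) := ∫_K F(k·x)·conj(χ(k)) dk. Then Σ_χ ‖F_χ‖_{L^p(X,μ)}^p ≤ ‖F‖_{L^p(X,μ)}^p, where the sum runs over all continuous characters of K. -/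
open MeasureTheory
open scoped ENNReal


lemma aux_sum_rpow_le {ι : Type*} (s : Finset ι) (a : ι → ℝ) (ha : ∀ i, 0 ≤ a i)
    {S : ℝ} (hS : 0 ≤ S) (h : ∑ i ∈ s, a i ^ (2:ℝ) ≤ S) {p : ℝ} (hp : 2 ≤ p) :
    ∑ i ∈ s, a i ^ p ≤ S ^ (p / 2) := by
  have hexp : (0:ℝ) ≤ (p - 2) / 2 := by linarith
  have hterm : ∀ i ∈ s, a i ^ p ≤ a i ^ (2:ℝ) * S ^ ((p - 2) / 2) := by
    intro i hi
    have hai2S : a i ^ (2:ℝ) ≤ S := by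
      refine le_trans ?_ h
      exact Finset.single_le_sum (fun j _ => Real.rpow_nonneg (ha j) 2) hi
    have h1 : a i ^ p = a i ^ (2:ℝ) * a i ^ (p - 2) := by
      rw [← Real.rpow_add' (ha i) (by norm_num; linarith)]
      norm_num
    have h2 : a i ^ (p - 2) ≤ S ^ ((p - 2) / 2) := by
      have e1 : a i ^ (p - 2) = (a i ^ (2:ℝ)) ^ ((p - 2) / 2) := by
        rw [← Real.rpow_mul (ha i)]; congr 1; ring
      rw [e1]
      exact Real.rpow_le_rpow (Real.rpow_nonneg (ha i) 2) hai2S hexp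
    calc a i ^ p = a i ^ (2:ℝ) * a i ^ (p - 2) := h1
    _ ≤ a i ^ (2:ℝ) * S ^ ((p - 2) / 2) :=
        mul_le_mul_of_nonneg_left h2 (Real.rpow_nonneg (ha i) 2)
  calc ∑ i ∈ s, a i ^ p ≤ ∑ i ∈ s, a i ^ (2:ℝ) * S ^ ((p-2)/2) := Finset.sum_le_sum hterm
  _ = (∑ i ∈ s, a i ^ (2:ℝ)) * S ^ ((p-2)/2) := by rw [Finset.sum_mul]
  _ ≤ S * S ^ ((p-2)/2) := mul_le_mul_of_nonneg_right h (Real.rpow_nonneg hS _)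
  _ = S ^ (p/2) := by
      rw [← Real.rpow_one_add' hS (by intro hc; linarith)]
      ring_nf

lemma aux_char_integral_zero {K : Type} [TopologicalSpace K] [CommGroup K] [IsTopologicalGroup K]
    [MeasurableSpace K] [BorelSpace K]
    (ν : Measure K) [ν.IsMulLeftInvariant]
    (ψ : K → ℂ) (hmul : ∀ a b, ψ (a * b) = ψ a * ψ b) (k₀ : K) (hk₀ : ψ k₀ ≠ 1) :
    ∫ k, ψ k ∂ν = 0 := by
  have h := integral_mul_left_eq_self (μ := ν) ψ k₀
  simp_rw [hmul k₀, MeasureTheory.integral_const_mul] at h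
  have h2 : (ψ k₀ - 1) * ∫ k, ψ k ∂ν = 0 := by ring_nf; linear_combination h
  rcases mul_eq_zero.1 h2 with h3 | h3
  · exact absurd (by linear_combination h3) hk₀
  · exact h3

lemma aux_orthonormal {K : Type} [TopologicalSpace K] [CompactSpace K] [T2Space K]
    [CommGroup K] [IsTopologicalGroup K] [MeasurableSpace K] [BorelSpace K]
    (ν : Measure K) [ν.IsHaarMeasure] [IsProbabilityMeasure ν]
    (hχmem : ∀ χ : {χ : K → ℂ // Continuous χ ∧ (∀ a b, χ (a * b) = χ a * χ b) ∧ ∀ k, ‖χ k‖ = 1},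
      MemLp χ.1 2 ν) :
    Orthonormal ℂ (fun χ => (hχmem χ).toLp χ.1) := by
  classical
  rw [orthonormal_iff_ite]
  intro χ χ'
  have he : (inner ℂ ((hχmem χ).toLp χ.1) ((hχmem χ').toLp χ'.1) : ℂ)
      = ∫ k, (starRingEnd ℂ) (χ.1 k) * χ'.1 k ∂ν := by
    rw [L2.inner_def]
    refine integral_congr_ae ?_
    filter_upwards [(hχmem χ).coeFn_toLp, (hχmem χ').coeFn_toLp] with k h1 h2
    rw [RCLike.inner_apply', h1, h2]
  rw [he]
  by_cases hcc : χ = χ'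
  · subst hcc
    simp only [if_pos rfl]
    have : ∀ k, (starRingEnd ℂ) (χ.1 k) * χ.1 k = 1 := by
      intro k
      have hn := χ.2.2.2 k
      rw [mul_comm, Complex.mul_conj, Complex.normSq_eq_norm_sq, hn]
      norm_num
    simp_rw [this]
    simp
  · rw [if_neg hcc]
    obtain ⟨k₀, hk₀⟩ : ∃ k₀, χ.1 k₀ ≠ χ'.1 k₀ := by
      by_contra hcon
      push_neg at hcon
      exact hcc (Subtype.ext (funext hcon))
    refine aux_char_integral_zero ν _ ?_ k₀ ?_
    · intro a b
      rw [χ.2.2.1, χ'.2.2.1, map_mul]; ring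
    · intro hone
      apply hk₀
      have hu : χ.1 k₀ * (starRingEnd ℂ) (χ.1 k₀) = 1 := by
        rw [Complex.mul_conj, Complex.normSq_eq_norm_sq, χ.2.2.2 k₀]
        norm_num
      have := congrArg (fun z => χ.1 k₀ * z) hone
      simp only [mul_one] at this
      rw [← mul_assoc, hu, one_mul] at this
      exact this.symm


/-- **Bessel-type inequality for vertical Fourier series** (Lemma `lem:bessel`):
for a measure-preserving action of a compact second countable abelian group `K` on a
probability space and `p ∈ [2,∞)`, the `p`-th powers of the `L^p` norms of the vertical
Fourier components `F_χ(x) = ∫_K F(k•x) conj(χ k) dk` sum to at most `‖F‖_p^p`. -/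
theorem stmt_17 {K : Type} [TopologicalSpace K] [CompactSpace K] [T2Space K]
    [SecondCountableTopology K] [CommGroup K] [IsTopologicalGroup K]
    [MeasurableSpace K] [BorelSpace K]
    (ν : Measure K) [ν.IsHaarMeasure] [IsProbabilityMeasure ν]
    {X : Type} [MeasurableSpace X] (μ : Measure X) [IsProbabilityMeasure μ]
    [MulAction K X]
    (hmeas : Measurable fun q : K × X => q.1 • q.2)
    (hmp : ∀ k : K, MeasurePreserving (fun x : X => k • x) μ μ)
    (p : ℝ) (hp : 2 ≤ p)
    (F : X → ℂ) (hF : MemLp F (ENNReal.ofReal p) μ) :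
    ∑' χ : {χ : K → ℂ // Continuous χ ∧ (∀ a b, χ (a * b) = χ a * χ b) ∧ ∀ k, ‖χ k‖ = 1},
        eLpNorm (fun x => ∫ k, F (k • x) * (starRingEnd ℂ) (χ.1 k) ∂ν)
          (ENNReal.ofReal p) μ ^ p
      ≤ eLpNorm F (ENNReal.ofReal p) μ ^ p := by
  classical
  set q := ENNReal.ofReal p with hqdef
  have hp0 : (0:ℝ) < p := by linarith
  have hq_toReal : q.toReal = p := ENNReal.toReal_ofReal hp0.le
  have hq0 : q ≠ 0 := by
    simp only [hqdef, ne_eq, ENNReal.ofReal_eq_zero, not_le]; exact hp0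
  have hqtop : q ≠ ⊤ := ENNReal.ofReal_ne_top
  have h2q : (2:ℝ≥0∞) ≤ q := by
    rw [hqdef, ← ENNReal.ofReal_ofNat 2]
    exact ENNReal.ofReal_le_ofReal hp
  -- the p-th power of an Lp norm is the lintegral of p-th powers
  have hpow : ∀ {Y : Type} [MeasurableSpace Y] (m : Measure Y) (f : Y → ℂ),
      eLpNorm f q m ^ p = ∫⁻ y, (‖f y‖₊ : ℝ≥0∞) ^ p ∂m := by
    intro Y _ m f
    rw [eLpNorm_eq_lintegral_rpow_enorm_toReal hq0 hqtop, hq_toReal, ← ENNReal.rpow_mul,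
      one_div_mul_cancel hp0.ne', ENNReal.rpow_one]
    rfl
  -- measurable representative
  set G := hF.1.mk F with hGdef
  have hG : StronglyMeasurable G := hF.1.stronglyMeasurable_mk
  have hFG : F =ᵐ[μ] G := hF.1.ae_eq_mk
  have hGmeas : Measurable G := hG.measurable
  -- the action map is measure preserving on the product
  have hφ : MeasurePreserving (fun z : K × X => z.1 • z.2) (ν.prod μ) μ := by
    refine ⟨hmeas, ?_⟩
    refine Measure.ext fun s hs => ?_
    rw [Measure.map_apply hmeas hs, Measure.prod_apply (hmeas hs)]
    have : ∀ k : K, μ (Prod.mk k ⁻¹' ((fun z : K × X => z.1 • z.2) ⁻¹' s)) = μ s := by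
      intro k
      exact (hmp k).measure_preimage hs.nullMeasurableSet
    simp_rw [this]
    simp [lintegral_const]
  have h3 : ∀ᵐ x ∂μ, ∀ᵐ k ∂ν, F (k • x) = G (k • x) := by
    have h1 : ∀ᵐ z ∂(ν.prod μ), F (z.1 • z.2) = G (z.1 • z.2) :=
      hφ.quasiMeasurePreserving.ae hFG
    have h2 : ∀ᵐ z ∂(μ.prod ν), F (z.2 • z.1) = G (z.2 • z.1) :=
      (Measure.measurePreserving_swap).quasiMeasurePreserving.ae h1
    exact Measure.ae_ae_of_ae_prod h2
  -- Tonelli computation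
  set B := ∫⁻ y, (‖G y‖₊ : ℝ≥0∞) ^ p ∂μ with hBdef
  have hB_eq : eLpNorm F q μ ^ p = B := by
    rw [eLpNorm_congr_ae hFG, hpow]
  have hBtop : B ≠ ⊤ := by
    rw [← hB_eq]
    exact (ENNReal.rpow_lt_top_of_nonneg hp0.le hF.2.ne).ne
  have hjm : Measurable fun z : X × K => (‖G (z.2 • z.1)‖₊ : ℝ≥0∞) ^ p :=
    ((hGmeas.comp (hmeas.comp measurable_swap)).enorm).pow_const p
  have hswap : ∫⁻ x, (∫⁻ k, (‖G (k • x)‖₊ : ℝ≥0∞) ^ p ∂ν) ∂μ = B := by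
    rw [lintegral_lintegral_swap hjm.aemeasurable]
    have hin : ∀ k : K, ∫⁻ x, (‖G (k • x)‖₊ : ℝ≥0∞) ^ p ∂μ = B := by
      intro k
      exact (hmp k).lintegral_comp (hGmeas.enorm.pow_const p)
    simp_rw [hin]
    simp [lintegral_const]
  have hxint : ∀ᵐ x ∂μ, (∫⁻ k, (‖G (k • x)‖₊ : ℝ≥0∞) ^ p ∂ν) < ⊤ := by
    refine ae_lt_top ?_ (by rw [hswap]; exact hBtop)
    exact hjm.lintegral_prod_right'
  -- characters as L² elements
  have hχmem : ∀ χ : {χ : K → ℂ // Continuous χ ∧ (∀ a b, χ (a * b) = χ a * χ b) ∧ ∀ k, ‖χ k‖ = 1},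
      MemLp χ.1 2 ν := fun χ =>
    MemLp.of_bound χ.2.1.aestronglyMeasurable 1 (Filter.Eventually.of_forall fun k => (χ.2.2.2 k).le)
  have horth := aux_orthonormal ν hχmem
  -- pointwise Bessel bound
  have hkey : ∀ᵐ x ∂μ, ∀ s : Finset {χ : K → ℂ // Continuous χ ∧ (∀ a b, χ (a * b) = χ a * χ b) ∧ ∀ k, ‖χ k‖ = 1},
      ∑ χ ∈ s, (‖∫ k, G (k • x) * (starRingEnd ℂ) (χ.1 k) ∂ν‖₊ : ℝ≥0∞) ^ p
        ≤ ∫⁻ k, (‖G (k • x)‖₊ : ℝ≥0∞) ^ p ∂ν := by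
    filter_upwards [hxint] with x hx
    intro s
    set g : K → ℂ := fun k => G (k • x) with hgdef
    have hgmeas : Measurable g := hGmeas.comp (hmeas.comp (measurable_id.prodMk measurable_const))
    have hT : (∫⁻ k, (‖g k‖₊ : ℝ≥0∞) ^ p ∂ν) ≠ ⊤ := hx.ne
    have hgq : MemLp g q ν := by
      refine ⟨hgmeas.aestronglyMeasurable, ?_⟩
      rw [eLpNorm_eq_lintegral_rpow_enorm_toReal hq0 hqtop, hq_toReal]
      exact ENNReal.rpow_lt_top_of_nonneg (by positivity) hT
    have hg2 : MemLp g 2 ν := hgq.mono_exponent h2q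
    set fx := hg2.toLp g with hfxdef
    have hinner : ∀ χ : {χ : K → ℂ // Continuous χ ∧ (∀ a b, χ (a * b) = χ a * χ b) ∧ ∀ k, ‖χ k‖ = 1},
        (inner ℂ ((hχmem χ).toLp χ.1) fx : ℂ) = ∫ k, G (k • x) * (starRingEnd ℂ) (χ.1 k) ∂ν := by
      intro χ
      rw [L2.inner_def]
      have h1 : ∫ a, (inner ℂ (((hχmem χ).toLp χ.1 : Lp ℂ 2 ν) a) (fx a) : ℂ) ∂ν
          = ∫ k, (starRingEnd ℂ) (χ.1 k) * g k ∂ν := by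
        refine integral_congr_ae ?_
        filter_upwards [(hχmem χ).coeFn_toLp, hg2.coeFn_toLp] with k e1 e2
        rw [RCLike.inner_apply', e1, e2]
      rw [h1]
      simp_rw [mul_comm]
      rfl
    have bessel := horth.sum_inner_products_le fx (s := s)
    -- real-valued chain
    have hreal : ∑ χ ∈ s, ‖∫ k, G (k • x) * (starRingEnd ℂ) (χ.1 k) ∂ν‖ ^ p
        ≤ ((∫⁻ k, (‖g k‖₊ : ℝ≥0∞) ^ p ∂ν)).toReal := by
      have h2 : ∑ χ ∈ s, ‖∫ k, G (k • x) * (starRingEnd ℂ) (χ.1 k) ∂ν‖ ^ (2:ℝ) ≤ ‖fx‖ ^ (2:ℝ) := by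
        have := bessel
        simp_rw [hinner] at this
        calc ∑ χ ∈ s, ‖∫ k, G (k • x) * (starRingEnd ℂ) (χ.1 k) ∂ν‖ ^ (2:ℝ)
            = ∑ χ ∈ s, ‖∫ k, G (k • x) * (starRingEnd ℂ) (χ.1 k) ∂ν‖ ^ (2:ℕ) := by
              refine Finset.sum_congr rfl fun χ _ => ?_
              rw [← Real.rpow_natCast]; norm_num
          _ ≤ ‖fx‖ ^ (2:ℕ) := this
          _ = ‖fx‖ ^ (2:ℝ) := by rw [← Real.rpow_natCast]; norm_num
      have h3 := aux_sum_rpow_le s _ (fun χ => norm_nonneg _)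
        (Real.rpow_nonneg (norm_nonneg fx) 2) h2 hp
      refine h3.trans ?_
      have h4 : (‖fx‖ ^ (2:ℝ)) ^ (p / 2) = ‖fx‖ ^ p := by
        rw [← Real.rpow_mul (norm_nonneg fx)]; congr 1; ring
      rw [h4]
      have h5 : ‖fx‖ = (eLpNorm g 2 ν).toReal := Lp.norm_toLp g hg2
      have h6 : eLpNorm g 2 ν ≤ eLpNorm g q ν :=
        eLpNorm_le_eLpNorm_of_exponent_le h2q hgmeas.aestronglyMeasurable
      have h7 : ‖fx‖ ≤ (eLpNorm g q ν).toReal := by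
        rw [h5]; exact ENNReal.toReal_mono hgq.2.ne h6
      have h8 : ((eLpNorm g q ν).toReal) ^ p = ((∫⁻ k, (‖g k‖₊ : ℝ≥0∞) ^ p ∂ν)).toReal := by
        rw [ENNReal.toReal_rpow]
        congr 1
        rw [eLpNorm_eq_lintegral_rpow_enorm_toReal hq0 hqtop, hq_toReal, ← ENNReal.rpow_mul,
          one_div_mul_cancel hp0.ne', ENNReal.rpow_one]
        rfl
      rw [← h8]
      exact Real.rpow_le_rpow (norm_nonneg fx) h7 hp0.le
    -- convert to ENNReal
    calc ∑ χ ∈ s, (‖∫ k, G (k • x) * (starRingEnd ℂ) (χ.1 k) ∂ν‖₊ : ℝ≥0∞) ^ p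
        = ENNReal.ofReal (∑ χ ∈ s, ‖∫ k, G (k • x) * (starRingEnd ℂ) (χ.1 k) ∂ν‖ ^ p) := by
          rw [ENNReal.ofReal_sum_of_nonneg (fun χ _ => Real.rpow_nonneg (norm_nonneg _) p)]
          refine Finset.sum_congr rfl fun χ _ => ?_
          rw [← ENNReal.ofReal_rpow_of_nonneg (norm_nonneg _) hp0.le, ofReal_norm]
          rfl
      _ ≤ ∫⁻ k, (‖G (k • x)‖₊ : ℝ≥0∞) ^ p ∂ν := ENNReal.ofReal_le_of_le_toReal hreal
  -- assembly
  rw [ENNReal.tsum_eq_iSup_sum]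
  refine iSup_le fun s => ?_
  have hcongr : ∀ χ : {χ : K → ℂ // Continuous χ ∧ (∀ a b, χ (a * b) = χ a * χ b) ∧ ∀ k, ‖χ k‖ = 1},
      eLpNorm (fun x => ∫ k, F (k • x) * (starRingEnd ℂ) (χ.1 k) ∂ν) q μ
        = eLpNorm (fun x => ∫ k, G (k • x) * (starRingEnd ℂ) (χ.1 k) ∂ν) q μ := by
    intro χ
    refine eLpNorm_congr_ae ?_
    filter_upwards [h3] with x hx
    refine integral_congr_ae ?_
    filter_upwards [hx] with k hk
    rw [hk]
  have hc_meas : ∀ χ : {χ : K → ℂ // Continuous χ ∧ (∀ a b, χ (a * b) = χ a * χ b) ∧ ∀ k, ‖χ k‖ = 1},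
      Measurable fun x => (‖∫ k, G (k • x) * (starRingEnd ℂ) (χ.1 k) ∂ν‖₊ : ℝ≥0∞) ^ p := by
    intro χ
    have hsm : StronglyMeasurable fun z : X × K => G (z.2 • z.1) * (starRingEnd ℂ) (χ.1 z.2) := by
      refine StronglyMeasurable.mul ?_ ?_
      · exact (hGmeas.comp (hmeas.comp measurable_swap)).stronglyMeasurable
      · exact ((Complex.continuous_conj.comp χ.2.1).measurable.comp measurable_snd).stronglyMeasurable
    exact ((hsm.integral_prod_right').measurable.enorm).pow_const p
  calc ∑ χ ∈ s, eLpNorm (fun x => ∫ k, F (k • x) * (starRingEnd ℂ) (χ.1 k) ∂ν) q μ ^ p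
      = ∑ χ ∈ s, ∫⁻ x, (‖∫ k, G (k • x) * (starRingEnd ℂ) (χ.1 k) ∂ν‖₊ : ℝ≥0∞) ^ p ∂μ := by
        refine Finset.sum_congr rfl fun χ _ => ?_
        rw [hcongr χ, hpow]
    _ = ∫⁻ x, ∑ χ ∈ s, (‖∫ k, G (k • x) * (starRingEnd ℂ) (χ.1 k) ∂ν‖₊ : ℝ≥0∞) ^ p ∂μ := by
        rw [lintegral_finset_sum s (fun χ _ => hc_meas χ)]
    _ ≤ ∫⁻ x, (∫⁻ k, (‖G (k • x)‖₊ : ℝ≥0∞) ^ p ∂ν) ∂μ := by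
        refine lintegral_mono_ae ?_
        filter_upwards [hkey] with x hx
        exact hx s
    _ = B := hswap
    _ = eLpNorm F q μ ^ p := hB_eq.symm
end

section
/- Let G be a nilpotent group with a filtration Gb = (G_i) of finite length d, and let Γ ≤ G be a subgroup of finite index. Then for every Gb-polynomial sequence g: ℤ→G the sequence of cosets n ↦ g(n)Γ is periodic: there exists an integer s ≥ 1 such that g(n)⁻¹·g(n+s) ∈ Γ for all n∈ℤ. -/
/-- `IsPolySeq k Gs g` says that `g : ℤ → G` is a polynomial sequence with respect to the
prefiltration `Gs` (of length `k - 1`) and the translation maps `n ↦ n + b`.  At fuel `0`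
(trivial prefiltration) the only polynomial sequence is the constant identity; at fuel
`k+1`, `g` takes values in `Gs 0` and every discrete derivative
`D_b g (n) = g(n)⁻¹ g(n+b)` is polynomial with respect to the shifted prefiltration. -/
def IsPolySeq {G : Type*} [Group G] : ℕ → (ℕ → Subgroup G) → (ℤ → G) → Prop
  | 0, _, g => ∀ n, g n = 1
  | k + 1, Gs, g => (∀ n, g n ∈ Gs 0) ∧
      ∀ b : ℤ, ∃ D : ℤ → G, IsPolySeq k (fun i => Gs (i + 1)) D ∧
        ∀ n : ℤ, D n = (g n)⁻¹ * g (n + b)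

/-- Pushing a polynomial sequence forward along a group homomorphism. -/
lemma isPolySeq_comp {G H : Type*} [Group G] [Group H] (φ : G →* H) :
    ∀ (k : ℕ) (Gs : ℕ → Subgroup G) (g : ℤ → G), IsPolySeq k Gs g →
      IsPolySeq k (fun i => (Gs i).map φ) (fun n => φ (g n))
  | 0, Gs, g, hg => fun n => by simp [hg n]
  | k + 1, Gs, g, hg => by
    obtain ⟨h0, hD⟩ := hg
    refine ⟨fun n => Subgroup.mem_map_of_mem φ (h0 n), fun b => ?_⟩
    obtain ⟨D, hDp, hDe⟩ := hD b
    exact ⟨fun n => φ (D n), isPolySeq_comp φ k _ D hDp, fun n => by simp [hDe n]⟩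

/-- A polynomial sequence in a finite group is periodic. -/
lemma periodic_of_polySeq {H : Type*} [Group H] [Finite H] :
    ∀ (k : ℕ) (Gs : ℕ → Subgroup H) (g : ℤ → H), IsPolySeq k Gs g →
      ∃ s : ℤ, 1 ≤ s ∧ ∀ n : ℤ, g (n + s) = g n
  | 0, _, g, hg => ⟨1, le_refl 1, fun n => by rw [hg, hg]⟩
  | k + 1, Gs, g, hg => by
    obtain ⟨-, hD⟩ := hg
    obtain ⟨D, hDp, hDe⟩ := hD 1
    obtain ⟨s, hs1, hsper⟩ := periodic_of_polySeq k _ D hDp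
    -- the `t`-step derivative is `s`-periodic, by induction on `t`
    have tel : ∀ (t : ℕ) (n : ℤ),
        (g n)⁻¹ * g (n + t) = (g (n + s))⁻¹ * g (n + s + t) := by
      intro t
      induction t with
      | zero => intro n; simp
      | succ t ih =>
        intro n
        have e1 : (g n)⁻¹ * g (n + (t + 1 : ℕ)) =
            ((g n)⁻¹ * g (n + t)) * D (n + t) := by
          rw [hDe (n + t)]; push_cast; group
        have e2 : (g (n + s))⁻¹ * g (n + s + (t + 1 : ℕ)) =
            ((g (n + s))⁻¹ * g (n + s + t)) * D (n + s + t) := by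
          rw [hDe (n + s + t)]; push_cast; group
        have e3 : D (n + s + t) = D (n + t) := by
          have : n + s + (t : ℤ) = n + t + s := by ring
          rw [this, hsper]
        rw [e1, e2, e3, ih n]
    set Ds : ℤ → H := fun n => (g n)⁻¹ * g (n + s) with hDs
    have hDsper : ∀ n : ℤ, Ds (n + s) = Ds n := by
      intro n
      obtain ⟨t, rfl⟩ : ∃ t : ℕ, s = (t : ℤ) := ⟨s.toNat, (Int.toNat_of_nonneg (by omega)).symm⟩
      exact (tel t n).symm
    have hDsiter : ∀ (m : ℕ) (n : ℤ), Ds (n + m * s) = Ds n := by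
      intro m
      induction m with
      | zero => intro n; simp
      | succ m ih =>
        intro n
        have h1 : n + ((m : ℕ) + 1 : ℕ) * s = n + m * s + s := by push_cast; ring
        rw [h1, hDsper, ih]
    have key : ∀ (m : ℕ) (n : ℤ), g (n + m * s) = g n * (Ds n) ^ m := by
      intro m
      induction m with
      | zero => intro n; simp
      | succ m ih =>
        intro n
        have h1 : n + ((m : ℕ) + 1 : ℕ) * s = n + m * s + s := by push_cast; ring
        have h2 : g (n + m * s + s) = g (n + m * s) * Ds (n + m * s) := by
          simp [hDs]
        rw [h1, h2, ih, hDsiter, pow_succ, mul_assoc]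
    refine ⟨(Nat.card H : ℤ) * s, ?_, fun n => ?_⟩
    · have : 0 < Nat.card H := Nat.card_pos
      have : 1 ≤ (Nat.card H : ℤ) := by exact_mod_cast this
      nlinarith
    · have : n + (Nat.card H : ℤ) * s = n + (Nat.card H : ℕ) * s := by push_cast; ring
      rw [this, key (Nat.card H) n, pow_card_eq_one', mul_one]

/-- **Periodicity of polynomial sequences modulo a finite index subgroup**
(Lemma `lem:periodic`). -/
theorem stmt_18 {G : Type*} [Group G] (Gs : ℕ → Subgroup G) (d : ℕ)
    (hanti : ∀ i j : ℕ, i ≤ j → Gs j ≤ Gs i)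
    (hcomm : ∀ i j : ℕ, ∀ a ∈ Gs i, ∀ b ∈ Gs j, a⁻¹ * b⁻¹ * a * b ∈ Gs (i + j))
    (hfilt0 : Gs 0 = ⊤) (hfilt1 : Gs 1 = ⊤) (hlen : Gs (d + 1) = ⊥)
    (Γ : Subgroup G) (hΓ : Γ.FiniteIndex)
    (g : ℤ → G) (hg : IsPolySeq (d + 1) Gs g) :
    ∃ s : ℤ, 1 ≤ s ∧ ∀ n : ℤ, (g n)⁻¹ * g (n + s) ∈ Γ := by
  set K : Subgroup G := Γ.normalCore with hK
  have : K.FiniteIndex := Γ.finiteIndex_normalCore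
  have : Finite (G ⧸ K) := K.finite_quotient_of_finiteIndex
  have hpoly := isPolySeq_comp (QuotientGroup.mk' K) (d + 1) Gs g hg
  obtain ⟨s, hs1, hsper⟩ := periodic_of_polySeq (d + 1) _ _ hpoly
  refine ⟨s, hs1, fun n => ?_⟩
  have : ((g (n + s) : G) : G ⧸ K) = ((g n : G) : G ⧸ K) := hsper n
  have hmem : (g n)⁻¹ * g (n + s) ∈ K := (QuotientGroup.eq.mp this.symm)
  exact Γ.normalCore_le hmem
end
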